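/- arXiv:1910.04110 — 3 statements merged into one kernel-verified Lean document; each statement's English description precedes it below -/
import Mathlib

section
/- The Drinfeld map D : H* → H defined by D(φ) = (φ ⊗ id)((g ⊗ 1)·RR') = Σ_{i,j} φ(g a_i b_j)·b_i a_j is a linear isomorphism which maps SLF(H) onto Z(H) and satisfies D(φψ) = D(φ)D(ψ) for all φ, ψ ∈ SLF(H); hence D restricts to an isomorphism of algebras SLF(H) ≅ Z(H), and in particular SLF(H) is a commutative algebra. -/
/- STATEMENT 0: the Drinfeld map `D(φ) = Σ_{i,j} φ(g aᵢ bⱼ) • bᵢ aⱼ` is a linear isomorphism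
mapping `SLF(H)` onto `Z(H)`, multiplicative on `SLF(H)`; hence `SLF(H)` is commutative. -/

noncomputable section

open scoped TensorProduct
open TensorProduct

/-- Symmetric linear forms on `H`. -/
def IsSLF {H : Type} [Ring H] [Algebra ℂ H] (φ : Module.Dual ℂ H) : Prop :=
  ∀ x y : H, φ (x * y) = φ (y * x)

/-- The convolution product on the dual of a Hopf algebra:
`(φψ)(x) = φ(x')ψ(x'')`. -/
def conv {H : Type} [Ring H] [HopfAlgebra ℂ H] (φ ψ : Module.Dual ℂ H) :
    Module.Dual ℂ H :=
  LinearMap.mul' ℂ ℂ ∘ₗ TensorProduct.map φ ψ ∘ₗ (Coalgebra.comul (R := ℂ) (A := H))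

/-- The Drinfeld map `D(φ) = (φ ⊗ id)((g ⊗ 1)·RR') = Σ_{i,j} φ(g aᵢ bⱼ) • bᵢ aⱼ`. -/
def drinfeldMap {H ι : Type} [Ring H] [Algebra ℂ H] [Fintype ι]
    (aR bR : ι → H) (g : H) (φ : Module.Dual ℂ H) : H :=
  ∑ i, ∑ j, φ (g * (aR i * bR j)) • (bR i * aR j)

namespace DrinfeldAux
open TensorProduct Coalgebra HopfAlgebra


variable {H : Type} [Ring H] [HopfAlgebra ℂ H]

abbrev SS : H →ₗ[ℂ] H := HopfAlgebra.antipode (R := ℂ)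

lemma sum_counitR_smul {a : H} (r : Repr ℂ a (H × H)) :
    ∑ i ∈ r.index, counit (R := ℂ) (r.right i) • r.left i = a := by
  have h := sum_tmul_counit_eq (R := ℂ) r
  apply_fun (TensorProduct.rid ℂ H) at h
  rw [map_sum] at h
  simp only [TensorProduct.rid_tmul, one_smul] at h
  exact h

lemma sum_counitL_smul {a : H} (r : Repr ℂ a (H × H)) :
    ∑ i ∈ r.index, counit (R := ℂ) (r.left i) • r.right i = a := by
  have h := sum_counit_tmul_eq (R := ℂ) r
  apply_fun (TensorProduct.lid ℂ H) at h
  rw [map_sum] at h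
  simp only [TensorProduct.lid_tmul, one_smul] at h
  exact h

lemma S_one : SS (1 : H) = 1 := by
  have h := mul_antipode_rTensor_comul_apply (R := ℂ) (a := (1 : H))
  simpa [Algebra.TensorProduct.one_def] using h

lemma rep3_eq {K : Type} [AddCommGroup K] [Module ℂ K]
    (F : H ⊗[ℂ] (H ⊗[ℂ] H) →ₗ[ℂ] K) {a : H} (r : Repr ℂ a (H × H))
    (rL : (i : r.ι) → Repr ℂ (r.left i) (H × H)) (rR : (i : r.ι) → Repr ℂ (r.right i) (H × H)) :
    ∑ i ∈ r.index, ∑ j ∈ (rL i).index,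
      F ((rL i).left j ⊗ₜ[ℂ] ((rL i).right j ⊗ₜ[ℂ] r.right i))
    = ∑ i ∈ r.index, ∑ j ∈ (rR i).index,
      F (r.left i ⊗ₜ[ℂ] ((rR i).left j ⊗ₜ[ℂ] (rR i).right j)) := by
  have h := Coalgebra.sum_tmul_tmul_eq (R := ℂ) r rL rR
  apply_fun F at h
  simpa [map_sum] using h

/-- `Σ (S a₁ * a₂) ⊗ a₃ = 1 ⊗ a` -/
lemma collapse_SL {a : H} (r : Repr ℂ a (H × H)) (rR : (i : r.ι) → Repr ℂ (r.right i) (H × H)) :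
    ∑ i ∈ r.index, ∑ j ∈ (rR i).index,
      (SS (r.left i) * (rR i).left j) ⊗ₜ[ℂ] (rR i).right j = (1 : H) ⊗ₜ[ℂ] a := by
  classical
  have h := rep3_eq (H := H)
    ((LinearMap.rTensor H (LinearMap.mul' ℂ H))
      ∘ₗ (TensorProduct.assoc ℂ H H H).symm.toLinearMap
      ∘ₗ (LinearMap.rTensor (H ⊗[ℂ] H) (SS (H := H))))
    r (fun i => ℛ ℂ (r.left i)) rR
  simp only [LinearMap.comp_apply, LinearMap.rTensor_tmul, LinearEquiv.coe_coe,
    TensorProduct.assoc_symm_tmul, LinearMap.mul'_apply] at h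
  rw [← h]
  have : ∀ i ∈ r.index, ∑ j ∈ (ℛ ℂ (r.left i)).index,
      (SS (H := H) ((ℛ ℂ (r.left i)).left j) * (ℛ ℂ (r.left i)).right j) ⊗ₜ[ℂ] r.right i
      = (1 : H) ⊗ₜ[ℂ] (counit (R := ℂ) (r.left i) • r.right i) := by
    intro i _
    rw [← TensorProduct.sum_tmul]
    rw [sum_antipode_mul_eq_smul (R := ℂ) (ℛ ℂ (r.left i)), TensorProduct.smul_tmul]
  rw [Finset.sum_congr rfl this, ← TensorProduct.tmul_sum, sum_counitL_smul r]

/-- `Σ (a₁ * S a₂) ⊗ a₃ = 1 ⊗ a` -/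
lemma collapse_LS {a : H} (r : Repr ℂ a (H × H)) (rR : (i : r.ι) → Repr ℂ (r.right i) (H × H)) :
    ∑ i ∈ r.index, ∑ j ∈ (rR i).index,
      (r.left i * SS ((rR i).left j)) ⊗ₜ[ℂ] (rR i).right j = (1 : H) ⊗ₜ[ℂ] a := by
  classical
  have h := rep3_eq (H := H)
    ((LinearMap.rTensor H (LinearMap.mul' ℂ H))
      ∘ₗ (TensorProduct.assoc ℂ H H H).symm.toLinearMap
      ∘ₗ (LinearMap.lTensor H (LinearMap.rTensor H (SS (H := H)))))
    r (fun i => ℛ ℂ (r.left i)) rR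
  simp only [LinearMap.comp_apply, LinearMap.rTensor_tmul, LinearMap.lTensor_tmul,
    LinearEquiv.coe_coe, TensorProduct.assoc_symm_tmul, LinearMap.mul'_apply] at h
  rw [← h]
  have : ∀ i ∈ r.index, ∑ j ∈ (ℛ ℂ (r.left i)).index,
      (((ℛ ℂ (r.left i)).left j) * SS (H := H) ((ℛ ℂ (r.left i)).right j)) ⊗ₜ[ℂ] r.right i
      = (1 : H) ⊗ₜ[ℂ] (counit (R := ℂ) (r.left i) • r.right i) := by
    intro i _
    rw [← TensorProduct.sum_tmul]
    rw [sum_mul_antipode_eq_smul (R := ℂ) (ℛ ℂ (r.left i)), TensorProduct.smul_tmul]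
  rw [Finset.sum_congr rfl this, ← TensorProduct.tmul_sum, sum_counitL_smul r]

/-- `Σ a₃ ⊗ (S a₁ * a₂) = a ⊗ 1` -/
lemma collapse_N1 {a : H} (r : Repr ℂ a (H × H)) (rR : (i : r.ι) → Repr ℂ (r.right i) (H × H)) :
    ∑ i ∈ r.index, ∑ j ∈ (rR i).index,
      ((rR i).right j) ⊗ₜ[ℂ] (SS (r.left i) * (rR i).left j) = a ⊗ₜ[ℂ] (1 : H) := by
  classical
  have h := rep3_eq (H := H)
    ((TensorProduct.comm ℂ H H).toLinearMap
      ∘ₗ (LinearMap.rTensor H (LinearMap.mul' ℂ H))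
      ∘ₗ (TensorProduct.assoc ℂ H H H).symm.toLinearMap
      ∘ₗ (LinearMap.rTensor (H ⊗[ℂ] H) (SS (H := H))))
    r (fun i => ℛ ℂ (r.left i)) rR
  simp only [LinearMap.comp_apply, LinearMap.rTensor_tmul, LinearEquiv.coe_coe,
    TensorProduct.assoc_symm_tmul, LinearMap.mul'_apply, TensorProduct.comm_tmul] at h
  rw [← h]
  have : ∀ i ∈ r.index, ∑ j ∈ (ℛ ℂ (r.left i)).index,
      r.right i ⊗ₜ[ℂ] (SS (H := H) ((ℛ ℂ (r.left i)).left j) * (ℛ ℂ (r.left i)).right j)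
      = (counit (R := ℂ) (r.left i) • r.right i) ⊗ₜ[ℂ] (1 : H) := by
    intro i _
    rw [← TensorProduct.tmul_sum]
    rw [sum_antipode_mul_eq_smul (R := ℂ) (ℛ ℂ (r.left i))]
    simp [TensorProduct.tmul_smul, TensorProduct.smul_tmul']
  rw [Finset.sum_congr rfl this, ← TensorProduct.sum_tmul, sum_counitL_smul r]

/-- `Σ (a₂ * S a₃) ⊗ a₁ = 1 ⊗ a` -/
lemma collapse_N2 {a : H} (r : Repr ℂ a (H × H)) (rL : (i : r.ι) → Repr ℂ (r.left i) (H × H)) :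
    ∑ i ∈ r.index, ∑ j ∈ (rL i).index,
      ((rL i).right j * SS (r.right i)) ⊗ₜ[ℂ] ((rL i).left j) = (1 : H) ⊗ₜ[ℂ] a := by
  classical
  have h := rep3_eq (H := H)
    ((TensorProduct.comm ℂ H H).toLinearMap
      ∘ₗ (LinearMap.lTensor H ((LinearMap.mul' ℂ H) ∘ₗ (LinearMap.lTensor H (SS (H := H))))))
    r rL (fun i => ℛ ℂ (r.right i))
  simp only [LinearMap.comp_apply, LinearMap.lTensor_tmul, LinearEquiv.coe_coe,
    LinearMap.mul'_apply, TensorProduct.comm_tmul] at h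
  rw [h]
  have : ∀ i ∈ r.index, ∑ j ∈ (ℛ ℂ (r.right i)).index,
      (((ℛ ℂ (r.right i)).left j) * SS (H := H) ((ℛ ℂ (r.right i)).right j)) ⊗ₜ[ℂ] r.left i
      = (1 : H) ⊗ₜ[ℂ] (counit (R := ℂ) (r.right i) • r.left i) := by
    intro i _
    rw [← TensorProduct.sum_tmul]
    rw [sum_mul_antipode_eq_smul (R := ℂ) (ℛ ℂ (r.right i)), TensorProduct.smul_tmul]
  rw [Finset.sum_congr rfl this, ← TensorProduct.tmul_sum, sum_counitR_smul r]


def mulRepr {a b : H} (ra : Repr ℂ a (H × H)) (rb : Repr ℂ b (H × H)) :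
    Repr ℂ (a * b) ((H × H) × (H × H)) where
  index := ra.index ×ˢ rb.index
  left := fun p => ra.left p.1 * rb.left p.2
  right := fun p => ra.right p.1 * rb.right p.2
  eq := by
    rw [Bialgebra.comul_mul, ← ra.eq, ← rb.eq, Finset.sum_mul_sum, Finset.sum_product]
    simp [Algebra.TensorProduct.tmul_mul_tmul]


theorem S_mul (a b : H) : SS (a * b) = SS b * SS a := by
  classical
  set ra := ℛ ℂ a with hra
  set rb := ℛ ℂ b with hrb
  set ra2 : (i : ra.ι) → Repr ℂ (ra.right i) (H × H) := fun i => ℛ ℂ (ra.right i) with hra2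
  set rb2 : (k : rb.ι) → Repr ℂ (rb.right k) (H × H) := fun k => ℛ ℂ (rb.right k) with hrb2
  -- Step 1: S b * S a = ∑ εε • (S lb * S la)
  have h1 : SS b * SS a = ∑ i ∈ ra.index, ∑ k ∈ rb.index,
      (counit (R := ℂ) (ra.right i) * counit (R := ℂ) (rb.right k)) •
        (SS (rb.left k) * SS (ra.left i)) := by
    conv_lhs => rw [← sum_counitR_smul ra, ← sum_counitR_smul rb]
    rw [map_sum, map_sum, Finset.sum_mul_sum]
    rw [Finset.sum_comm]
    refine Finset.sum_congr rfl fun i _ => Finset.sum_congr rfl fun k _ => ?_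
    rw [map_smul, map_smul, smul_mul_smul_comm]
    ring_nf
  -- Step 2: εε • 1 = ∑∑ (l2a * l2b) * S (r2a * r2b)
  have h2 : ∀ i k, (counit (R := ℂ) (ra.right i) * counit (R := ℂ) (rb.right k)) • (1 : H)
      = ∑ j ∈ (ra2 i).index, ∑ l ∈ (rb2 k).index,
        ((ra2 i).left j * (rb2 k).left l) * SS ((ra2 i).right j * (rb2 k).right l) := by
    intro i k
    have := sum_mul_antipode_eq_smul (R := ℂ) (mulRepr (ra2 i) (rb2 k))
    rw [Bialgebra.counit_mul] at this
    rw [← this]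
    exact Finset.sum_product (s := (ra2 i).index) (t := (rb2 k).index)
      (f := fun p => (ra2 i).left p.1 * (rb2 k).left p.2 *
        SS ((ra2 i).right p.1 * (rb2 k).right p.2))
  -- Step 3: combine
  have h3 : SS b * SS a = ∑ i ∈ ra.index, ∑ k ∈ rb.index, ∑ j ∈ (ra2 i).index,
      ∑ l ∈ (rb2 k).index,
      SS (rb.left k) * (SS (ra.left i) * (ra2 i).left j) * (rb2 k).left l *
        SS ((ra2 i).right j * (rb2 k).right l) := by
    rw [h1]
    refine Finset.sum_congr rfl fun i _ => Finset.sum_congr rfl fun k _ => ?_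
    have : (counit (R := ℂ) (ra.right i) * counit (R := ℂ) (rb.right k)) •
        (SS (rb.left k) * SS (ra.left i))
        = (SS (rb.left k) * SS (ra.left i)) *
          ((counit (R := ℂ) (ra.right i) * counit (R := ℂ) (rb.right k)) • (1 : H)) := by
      rw [mul_smul_comm, mul_one]
    rw [this, h2 i k, Finset.mul_sum]
    refine Finset.sum_congr rfl fun j _ => ?_
    rw [Finset.mul_sum]
    refine Finset.sum_congr rfl fun l _ => ?_
    noncomm_ring
  -- Step 4: collapse the a-legs
  have h4 : ∀ k l, ∑ i ∈ ra.index, ∑ j ∈ (ra2 i).index,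
      SS (rb.left k) * (SS (ra.left i) * (ra2 i).left j) * (rb2 k).left l *
        SS ((ra2 i).right j * (rb2 k).right l)
      = SS (rb.left k) * (rb2 k).left l * SS (a * (rb2 k).right l) := by
    intro k l
    have hc := collapse_SL ra ra2
    apply_fun (LinearMap.mul' ℂ H ∘ₗ TensorProduct.map
      ((LinearMap.mulRight ℂ ((rb2 k).left l)) ∘ₗ (LinearMap.mulLeft ℂ (SS (rb.left k))))
      ((SS (H := H)) ∘ₗ (LinearMap.mulRight ℂ ((rb2 k).right l)))) at hc
    simp only [map_sum, LinearMap.comp_apply, TensorProduct.map_tmul,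
      LinearMap.mul'_apply, LinearMap.mulRight_apply, LinearMap.mulLeft_apply,
      one_mul, mul_one] at hc
    exact hc
  -- Step 5: collapse the b-legs
  have h5 : ∑ k ∈ rb.index, ∑ l ∈ (rb2 k).index,
      SS (rb.left k) * (rb2 k).left l * SS (a * (rb2 k).right l) = SS (a * b) := by
    have hc := collapse_SL rb rb2
    apply_fun (LinearMap.mul' ℂ H ∘ₗ TensorProduct.map
      (LinearMap.id) ((SS (H := H)) ∘ₗ (LinearMap.mulLeft ℂ a))) at hc
    simp only [map_sum, LinearMap.comp_apply, TensorProduct.map_tmul,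
      LinearMap.mul'_apply, LinearMap.mulLeft_apply, LinearMap.id_coe, id_eq,
      one_mul] at hc
    exact hc
  have h6 : ∑ i ∈ ra.index, ∑ k ∈ rb.index, ∑ j ∈ (ra2 i).index, ∑ l ∈ (rb2 k).index,
      SS (rb.left k) * (SS (ra.left i) * (ra2 i).left j) * (rb2 k).left l *
        SS ((ra2 i).right j * (rb2 k).right l) = SS (a * b) := by
    rw [Finset.sum_comm (s := ra.index) (t := rb.index)]
    have reorder : ∀ k, ∑ i ∈ ra.index, ∑ j ∈ (ra2 i).index, ∑ l ∈ (rb2 k).index,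
        SS (rb.left k) * (SS (ra.left i) * (ra2 i).left j) * (rb2 k).left l *
          SS ((ra2 i).right j * (rb2 k).right l)
        = ∑ l ∈ (rb2 k).index, ∑ i ∈ ra.index, ∑ j ∈ (ra2 i).index,
        SS (rb.left k) * (SS (ra.left i) * (ra2 i).left j) * (rb2 k).left l *
          SS ((ra2 i).right j * (rb2 k).right l) := by
      intro k
      calc ∑ i ∈ ra.index, ∑ j ∈ (ra2 i).index, ∑ l ∈ (rb2 k).index,
            SS (rb.left k) * (SS (ra.left i) * (ra2 i).left j) * (rb2 k).left l *
              SS ((ra2 i).right j * (rb2 k).right l)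
          = ∑ i ∈ ra.index, ∑ l ∈ (rb2 k).index, ∑ j ∈ (ra2 i).index,
            SS (rb.left k) * (SS (ra.left i) * (ra2 i).left j) * (rb2 k).left l *
              SS ((ra2 i).right j * (rb2 k).right l) :=
            Finset.sum_congr rfl fun i _ => Finset.sum_comm
        _ = _ := Finset.sum_comm
    rw [Finset.sum_congr rfl fun k _ => reorder k]
    rw [Finset.sum_congr rfl fun k _ =>
      Finset.sum_congr rfl fun l _ => h4 k l]
    exact h5
  rw [h3]
  exact h6.symm

-- ###### new material ######

lemma comm_eq_algComm (w : H ⊗[ℂ] H) :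
    TensorProduct.comm ℂ H H w = Algebra.TensorProduct.comm ℂ H H w := by
  induction w using TensorProduct.induction_on with
  | zero => simp
  | tmul x y => rfl
  | add x y hx hy => rw [map_add, map_add, hx, hy]

lemma comm_mul (u v : H ⊗[ℂ] H) :
    TensorProduct.comm ℂ H H (u * v)
      = TensorProduct.comm ℂ H H u * TensorProduct.comm ℂ H H v := by
  rw [comm_eq_algComm, comm_eq_algComm, comm_eq_algComm, map_mul]

lemma comm_comm (u : H ⊗[ℂ] H) :
    TensorProduct.comm ℂ H H (TensorProduct.comm ℂ H H u) = u := by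
  induction u using TensorProduct.induction_on with
  | zero => simp
  | tmul x y => simp
  | add x y hx hy => rw [map_add, map_add, hx, hy]

section Rmat
variable {ι : Type} [Fintype ι] (aR bR : ι → H)

lemma comm_R : TensorProduct.comm ℂ H H (∑ i, aR i ⊗ₜ[ℂ] bR i) = ∑ i, bR i ⊗ₜ[ℂ] aR i := by
  rw [map_sum]; simp

lemma M_comm_comul
    (hRΔ : ∀ x : H, (∑ i, aR i ⊗ₜ[ℂ] bR i) * Coalgebra.comul (R := ℂ) x
      = (TensorProduct.comm ℂ H H) (Coalgebra.comul (R := ℂ) x) * ∑ i, aR i ⊗ₜ[ℂ] bR i)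
    (x : H) :
    ((∑ i, aR i ⊗ₜ[ℂ] bR i) * (∑ i, bR i ⊗ₜ[ℂ] aR i)) *
        (TensorProduct.comm ℂ H H (Coalgebra.comul (R := ℂ) x))
      = (TensorProduct.comm ℂ H H (Coalgebra.comul (R := ℂ) x)) *
        ((∑ i, aR i ⊗ₜ[ℂ] bR i) * (∑ i, bR i ⊗ₜ[ℂ] aR i)) := by
  have h2 : (∑ i, bR i ⊗ₜ[ℂ] aR i) * (TensorProduct.comm ℂ H H (Coalgebra.comul (R := ℂ) x))
      = Coalgebra.comul (R := ℂ) x * ∑ i, bR i ⊗ₜ[ℂ] aR i := by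
    have h3 := congrArg (TensorProduct.comm ℂ H H) (hRΔ x)
    rw [comm_mul, comm_mul, comm_R, comm_comm] at h3
    exact h3
  rw [mul_assoc, h2, ← mul_assoc, hRΔ x, mul_assoc]

lemma M_expand : (∑ i, aR i ⊗ₜ[ℂ] bR i) * (∑ i, bR i ⊗ₜ[ℂ] aR i)
    = ∑ i, ∑ j, (aR i * bR j) ⊗ₜ[ℂ] (bR i * aR j) := by
  rw [Finset.sum_mul_sum]
  simp [Algebra.TensorProduct.tmul_mul_tmul]

end Rmat

lemma decompL {w : H} (r : Repr ℂ w (H × H)) :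
    ∑ j ∈ r.index, ((1:H) ⊗ₜ[ℂ] SS (r.left j)) *
        (TensorProduct.comm ℂ H H (Coalgebra.comul (R := ℂ) (r.right j)))
      = w ⊗ₜ[ℂ] (1:H) := by
  have key := collapse_N1 r (fun j => ℛ ℂ (r.right j))
  rw [← key]
  refine Finset.sum_congr rfl fun j _ => ?_
  rw [← (ℛ ℂ (r.right j)).eq, map_sum, Finset.mul_sum]
  refine Finset.sum_congr rfl fun k _ => ?_
  rw [TensorProduct.comm_tmul, Algebra.TensorProduct.tmul_mul_tmul, one_mul]

lemma decompR {w : H} (r : Repr ℂ w (H × H)) :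
    ∑ j ∈ r.index, (TensorProduct.comm ℂ H H (Coalgebra.comul (R := ℂ) (r.left j))) *
        (SS (r.right j) ⊗ₜ[ℂ] (1:H))
      = (1:H) ⊗ₜ[ℂ] w := by
  have key := collapse_N2 r (fun j => ℛ ℂ (r.left j))
  rw [← key]
  refine Finset.sum_congr rfl fun j _ => ?_
  rw [← (ℛ ℂ (r.left j)).eq, map_sum, Finset.sum_mul]
  refine Finset.sum_congr rfl fun k _ => ?_
  rw [TensorProduct.comm_tmul, Algebra.TensorProduct.tmul_mul_tmul, mul_one]

/-- The key identity (★): for any element `M` of `H ⊗ H` commuting with all `Δᵒᵖ x`. -/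
theorem star_id (M : H ⊗[ℂ] H)
    (hM : ∀ x : H, M * (TensorProduct.comm ℂ H H (Coalgebra.comul (R := ℂ) x))
      = (TensorProduct.comm ℂ H H (Coalgebra.comul (R := ℂ) x)) * M)
    {h : H} (r : Repr ℂ h (H × H)) :
    ∑ i ∈ r.index, (r.left i ⊗ₜ[ℂ] (1:H)) * M * (SS (r.right i) ⊗ₜ[ℂ] (1:H))
    = ∑ i ∈ r.index, ((1:H) ⊗ₜ[ℂ] SS (r.left i)) * M * ((1:H) ⊗ₜ[ℂ] r.right i) := by
  classical
  set rL : (i : r.ι) → Repr ℂ (r.left i) (H × H) := fun i => ℛ ℂ (r.left i) with hrL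
  set rR : (i : r.ι) → Repr ℂ (r.right i) (H × H) := fun i => ℛ ℂ (r.right i) with hrR
  set B : H ⊗[ℂ] H →ₗ[ℂ] H ⊗[ℂ] H :=
    (LinearMap.mul' ℂ (H ⊗[ℂ] H)) ∘ₗ
      (TensorProduct.map ((TensorProduct.mk ℂ H H 1) ∘ₗ (SS (H := H)))
        ((TensorProduct.comm ℂ H H).toLinearMap ∘ₗ (Coalgebra.comul (R := ℂ)))) with hB
  set Θ : (H ⊗[ℂ] H) ⊗[ℂ] H →ₗ[ℂ] H ⊗[ℂ] H :=
    (LinearMap.mul' ℂ (H ⊗[ℂ] H)) ∘ₗ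
      (TensorProduct.map (LinearMap.mulRight ℂ M)
        (((TensorProduct.mk ℂ H H).flip 1) ∘ₗ (SS (H := H)))) with hΘ
  set F : H ⊗[ℂ] (H ⊗[ℂ] H) →ₗ[ℂ] H ⊗[ℂ] H :=
    Θ ∘ₗ (LinearMap.rTensor H B) ∘ₗ (TensorProduct.assoc ℂ H H H).symm.toLinearMap with hF
  have Fpure : ∀ x y z : H, F (x ⊗ₜ[ℂ] (y ⊗ₜ[ℂ] z))
      = (((1:H) ⊗ₜ[ℂ] SS x) * (TensorProduct.comm ℂ H H (Coalgebra.comul (R := ℂ) y))) * M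
        * (SS z ⊗ₜ[ℂ] (1:H)) := by
    intro x y z
    simp only [hF, hΘ, hB, LinearMap.comp_apply, LinearEquiv.coe_coe,
      TensorProduct.assoc_symm_tmul, LinearMap.rTensor_tmul, TensorProduct.map_tmul,
      LinearMap.mul'_apply, LinearMap.mulRight_apply, TensorProduct.mk_apply,
      LinearMap.flip_apply]
  have mid := rep3_eq F r rL rR
  have hL : ∑ i ∈ r.index, (r.left i ⊗ₜ[ℂ] (1:H)) * M * (SS (r.right i) ⊗ₜ[ℂ] (1:H))
      = ∑ i ∈ r.index, ∑ j ∈ (rL i).index,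
        F ((rL i).left j ⊗ₜ[ℂ] ((rL i).right j ⊗ₜ[ℂ] r.right i)) := by
    refine Finset.sum_congr rfl fun i _ => ?_
    rw [← decompL (rL i)]
    rw [Finset.sum_mul, Finset.sum_mul]
    exact Finset.sum_congr rfl fun j _ => (Fpure _ _ _).symm
  have hR : ∑ i ∈ r.index, ((1:H) ⊗ₜ[ℂ] SS (r.left i)) * M * ((1:H) ⊗ₜ[ℂ] r.right i)
      = ∑ i ∈ r.index, ∑ j ∈ (rR i).index,
        F (r.left i ⊗ₜ[ℂ] ((rR i).left j ⊗ₜ[ℂ] (rR i).right j)) := by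
    refine Finset.sum_congr rfl fun i _ => ?_
    have key : ∀ j, F (r.left i ⊗ₜ[ℂ] ((rR i).left j ⊗ₜ[ℂ] (rR i).right j))
        = (((1:H) ⊗ₜ[ℂ] SS (r.left i)) * M) *
            ((TensorProduct.comm ℂ H H (Coalgebra.comul (R := ℂ) ((rR i).left j))) *
              (SS ((rR i).right j) ⊗ₜ[ℂ] (1:H))) := by
      intro j
      rw [Fpure]
      rw [mul_assoc ((1:H) ⊗ₜ[ℂ] SS (r.left i))
        (TensorProduct.comm ℂ H H (Coalgebra.comul (R := ℂ) ((rR i).left j))) M]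
      rw [← hM ((rR i).left j)]
      rw [← mul_assoc ((1:H) ⊗ₜ[ℂ] SS (r.left i)) M
        (TensorProduct.comm ℂ H H (Coalgebra.comul (R := ℂ) ((rR i).left j)))]
      rw [mul_assoc]
    rw [Finset.sum_congr rfl fun j _ => key j, ← Finset.mul_sum, decompR (rR i), mul_assoc]
  rw [hL, hR, mid]

variable {H : Type} [Ring H] [HopfAlgebra ℂ H]

section Rmat2
variable {ι : Type} [Fintype ι] (aR bR : ι → H)

/-- the factorization map -/
def Phi (β : Module.Dual ℂ H) : H := ∑ i, ∑ j, β (aR i * bR j) • (bR i * aR j)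

/-- `β ⊗ id` as a linear map `H ⊗ H → H` -/
def LB (β : Module.Dual ℂ H) : H ⊗[ℂ] H →ₗ[ℂ] H :=
  (TensorProduct.lid ℂ H).toLinearMap ∘ₗ (TensorProduct.map β LinearMap.id)

@[simp] lemma LB_tmul (β : Module.Dual ℂ H) (u v : H) : LB β (u ⊗ₜ[ℂ] v) = β u • v := by
  simp [LB]

/-- intertwining: `Σ S(h₁) Φ(β) h₂ = Φ(h ⊳ β)` -/
lemma INT
    (hRΔ : ∀ x : H, (∑ i, aR i ⊗ₜ[ℂ] bR i) * Coalgebra.comul (R := ℂ) x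
      = (TensorProduct.comm ℂ H H) (Coalgebra.comul (R := ℂ) x) * ∑ i, aR i ⊗ₜ[ℂ] bR i)
    (β : Module.Dual ℂ H) {h : H} (r : Repr ℂ h (H × H)) :
    ∑ k ∈ r.index, SS (r.left k) * Phi aR bR β * r.right k
      = ∑ k ∈ r.index, ∑ i, ∑ j,
          β (r.left k * (aR i * bR j) * SS (r.right k)) • (bR i * aR j) := by
  classical
  have hstar := star_id ((∑ i, aR i ⊗ₜ[ℂ] bR i) * (∑ i, bR i ⊗ₜ[ℂ] aR i))
    (M_comm_comul aR bR hRΔ) r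
  apply_fun LB β at hstar
  rw [map_sum, map_sum] at hstar
  have EL : ∀ k, LB β (((1:H) ⊗ₜ[ℂ] SS (r.left k)) *
        ((∑ i, aR i ⊗ₜ[ℂ] bR i) * (∑ i, bR i ⊗ₜ[ℂ] aR i)) * ((1:H) ⊗ₜ[ℂ] r.right k))
      = SS (r.left k) * Phi aR bR β * r.right k := by
    intro k
    rw [M_expand]
    rw [Finset.mul_sum, Finset.sum_mul]
    rw [map_sum]
    have : ∀ i, LB β ((((1:H) ⊗ₜ[ℂ] SS (r.left k)) * ∑ j, (aR i * bR j) ⊗ₜ[ℂ] (bR i * aR j))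
          * ((1:H) ⊗ₜ[ℂ] r.right k))
        = SS (r.left k) * (∑ j, β (aR i * bR j) • (bR i * aR j)) * r.right k := by
      intro i
      rw [Finset.mul_sum, Finset.sum_mul, map_sum]
      rw [Finset.mul_sum, Finset.sum_mul]
      refine Finset.sum_congr rfl fun j _ => ?_
      rw [Algebra.TensorProduct.tmul_mul_tmul, Algebra.TensorProduct.tmul_mul_tmul,
        one_mul, mul_one, LB_tmul]
      rw [mul_smul_comm, smul_mul_assoc]
    rw [Finset.sum_congr rfl fun i _ => this i]
    rw [Phi, Finset.mul_sum, Finset.sum_mul]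
  have ER : ∀ k, LB β ((r.left k ⊗ₜ[ℂ] (1:H)) *
        ((∑ i, aR i ⊗ₜ[ℂ] bR i) * (∑ i, bR i ⊗ₜ[ℂ] aR i)) * (SS (r.right k) ⊗ₜ[ℂ] (1:H)))
      = ∑ i, ∑ j, β (r.left k * (aR i * bR j) * SS (r.right k)) • (bR i * aR j) := by
    intro k
    rw [M_expand]
    rw [Finset.mul_sum, Finset.sum_mul, map_sum]
    refine Finset.sum_congr rfl fun i _ => ?_
    rw [Finset.mul_sum, Finset.sum_mul, map_sum]
    refine Finset.sum_congr rfl fun j _ => ?_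
    rw [Algebra.TensorProduct.tmul_mul_tmul, Algebra.TensorProduct.tmul_mul_tmul,
      one_mul, mul_one, LB_tmul]
  rw [Finset.sum_congr rfl fun k _ => (EL k).symm,
    Finset.sum_congr rfl fun k _ => (ER k).symm]
  exact hstar.symm

end Rmat2

/-- central implies ad-invariant -/
lemma adInv_of_central (z : H) (hz : ∀ x : H, z * x = x * z) {h : H} (r : Repr ℂ h (H × H)) :
    ∑ i ∈ r.index, SS (r.left i) * z * r.right i = counit (R := ℂ) h • z := by
  have : ∀ i, SS (r.left i) * z * r.right i = (SS (r.left i) * r.right i) * z := by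
    intro i
    rw [mul_assoc, hz (r.right i), ← mul_assoc]
  rw [Finset.sum_congr rfl fun i _ => this i, ← Finset.sum_mul,
    sum_antipode_mul_eq_smul (R := ℂ) r, smul_mul_assoc, one_mul]

/-- ad-invariant implies central -/
lemma central_of_adInv (z : H)
    (hz : ∀ x : H,
      ∑ i ∈ (ℛ ℂ x).index, SS ((ℛ ℂ x).left i) * z * (ℛ ℂ x).right i
        = counit (R := ℂ) x • z)
    (x : H) : z * x = x * z := by
  classical
  set r := ℛ ℂ x with hr
  set r2 : (i : r.ι) → Repr ℂ (r.right i) (H × H) := fun i => ℛ ℂ (r.right i) with hr2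
  have key := collapse_LS r r2
  apply_fun ((LinearMap.mul' ℂ H) ∘ₗ
    (TensorProduct.map (LinearMap.mulRight ℂ z) LinearMap.id)) at key
  simp only [map_sum, LinearMap.comp_apply, TensorProduct.map_tmul, LinearMap.mul'_apply,
    LinearMap.mulRight_apply, LinearMap.id_coe, id_eq, one_mul] at key
  -- key : ∑ i ∑ j (r.left i * SS ((r2 i).left j) * z) * (r2 i).right j = z * x
  rw [← key]
  have : ∀ i ∈ r.index, ∑ j ∈ (r2 i).index,
      r.left i * SS ((r2 i).left j) * z * (r2 i).right j
      = counit (R := ℂ) (r.right i) • (r.left i * z) := by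
    intro i _
    have : ∀ j, r.left i * SS ((r2 i).left j) * z * (r2 i).right j
        = r.left i * (SS ((r2 i).left j) * z * (r2 i).right j) := by
      intro j
      rw [mul_assoc, mul_assoc, mul_assoc]
    rw [Finset.sum_congr rfl fun j _ => this j, ← Finset.mul_sum, hz (r.right i),
      mul_smul_comm]
  rw [Finset.sum_congr rfl this]
  have : ∑ i ∈ r.index, counit (R := ℂ) (r.right i) • (r.left i * z)
      = (∑ i ∈ r.index, counit (R := ℂ) (r.right i) • r.left i) * z := by
    rw [Finset.sum_mul]
    exact Finset.sum_congr rfl fun i _ => (smul_mul_assoc _ _ _).symm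
  rw [this, sum_counitR_smul r]

/-- q-character implies coadjoint invariance -/
lemma coadInv_of_qchar (μ : Module.Dual ℂ H)
    (hq : ∀ x y : H, μ (x * y) = μ (y * SS (SS x)))
    {h : H} (r : Repr ℂ h (H × H)) (w : H) :
    ∑ i ∈ r.index, μ (r.left i * w * SS (r.right i)) = counit (R := ℂ) h * μ w := by
  have step : ∀ i, μ (r.left i * w * SS (r.right i))
      = μ (w * SS (SS (r.left i) * r.right i)) := by
    intro i
    rw [mul_assoc, hq]
    rw [S_mul (SS (r.left i)) (r.right i)]
    rw [mul_assoc]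
  rw [Finset.sum_congr rfl fun i _ => step i]
  have : ∑ i ∈ r.index, μ (w * SS (SS (r.left i) * r.right i))
      = μ (w * SS (∑ i ∈ r.index, SS (r.left i) * r.right i)) := by
    rw [map_sum, Finset.mul_sum, map_sum]
  rw [this, sum_antipode_mul_eq_smul (R := ℂ) r, map_smul, S_one, mul_smul_comm,
    mul_one, map_smul, smul_eq_mul]


variable {H : Type} [Ring H] [HopfAlgebra ℂ H]

/-- coadjoint invariance implies q-character -/
lemma qchar_of_coadInv (μ : Module.Dual ℂ H)
    (hinv : ∀ (h w : H),
      ∑ i ∈ (ℛ ℂ h).index, μ ((ℛ ℂ h).left i * w * SS ((ℛ ℂ h).right i))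
        = counit (R := ℂ) h * μ w)
    (a b : H) : μ (a * b) = μ (b * SS (SS a)) := by
  classical
  set r := ℛ ℂ a with hr
  set rL : (i : r.ι) → Repr ℂ (r.left i) (H × H) := fun i => ℛ ℂ (r.left i) with hrL
  set rR : (i : r.ι) → Repr ℂ (r.right i) (H × H) := fun i => ℛ ℂ (r.right i) with hrR
  -- the ℂ-valued trilinear evaluator  x⊗(y⊗z) ↦ μ((x*b) * (SS (SS z) * SS y))
  set F : H ⊗[ℂ] (H ⊗[ℂ] H) →ₗ[ℂ] ℂ :=
    μ ∘ₗ (LinearMap.mul' ℂ H)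
      ∘ₗ (LinearMap.rTensor H (LinearMap.mulRight ℂ b))
      ∘ₗ (LinearMap.lTensor H ((LinearMap.mul' ℂ H)
        ∘ₗ (TensorProduct.map ((SS (H := H)) ∘ₗ (SS (H := H))) (SS (H := H)))
        ∘ₗ (TensorProduct.comm ℂ H H).toLinearMap)) with hF
  have Fpure : ∀ x y z : H, F (x ⊗ₜ[ℂ] (y ⊗ₜ[ℂ] z))
      = μ ((x * b) * (SS (SS z) * SS y)) := by
    intro x y z
    simp only [hF, LinearMap.comp_apply, LinearMap.lTensor_tmul, LinearEquiv.coe_coe,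
      TensorProduct.comm_tmul, TensorProduct.map_tmul, LinearMap.mul'_apply,
      LinearMap.rTensor_tmul, LinearMap.mulRight_apply]
  have mid := rep3_eq F r rL rR
  -- left side of mid equals μ (b * S² a) by coadjoint invariance
  have hXa : ∑ i ∈ r.index, ∑ j ∈ (rL i).index,
      F ((rL i).left j ⊗ₜ[ℂ] ((rL i).right j ⊗ₜ[ℂ] r.right i)) = μ (b * SS (SS a)) := by
    have perI : ∀ i, ∑ j ∈ (rL i).index,
        F ((rL i).left j ⊗ₜ[ℂ] ((rL i).right j ⊗ₜ[ℂ] r.right i))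
        = counit (R := ℂ) (r.left i) * μ (b * SS (SS (r.right i))) := by
      intro i
      have := hinv (r.left i) (b * SS (SS (r.right i)))
      rw [← this]
      refine Finset.sum_congr rfl fun j _ => ?_
      rw [Fpure]
      congr 1
      simp only [mul_assoc]
      rfl
    rw [Finset.sum_congr rfl fun i _ => perI i]
    have : ∑ i ∈ r.index, counit (R := ℂ) (r.left i) * μ (b * SS (SS (r.right i)))
        = μ (b * SS (SS (∑ i ∈ r.index, counit (R := ℂ) (r.left i) • r.right i))) := by
      rw [map_sum, map_sum, Finset.mul_sum, map_sum]
      refine Finset.sum_congr rfl fun i _ => ?_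
      rw [map_smul, map_smul, mul_smul_comm, map_smul, smul_eq_mul]
    rw [this, sum_counitL_smul r]
  -- right side of mid equals μ (a * b)
  have hXb : ∑ i ∈ r.index, ∑ j ∈ (rR i).index,
      F (r.left i ⊗ₜ[ℂ] ((rR i).left j ⊗ₜ[ℂ] (rR i).right j)) = μ (a * b) := by
    have perI : ∀ i, ∑ j ∈ (rR i).index,
        F (r.left i ⊗ₜ[ℂ] ((rR i).left j ⊗ₜ[ℂ] (rR i).right j))
        = counit (R := ℂ) (r.right i) • μ (r.left i * b) := by
      intro i
      have inner : ∑ j ∈ (rR i).index, SS (SS ((rR i).right j)) * SS ((rR i).left j)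
          = counit (R := ℂ) (r.right i) • (1 : H) := by
        have : ∀ j, SS (SS ((rR i).right j)) * SS ((rR i).left j)
            = SS ((rR i).left j * SS ((rR i).right j)) := by
          intro j
          rw [S_mul]
        rw [Finset.sum_congr rfl fun j _ => this j, ← map_sum,
          sum_mul_antipode_eq_smul (R := ℂ) (rR i), map_smul, S_one]
      calc ∑ j ∈ (rR i).index, F (r.left i ⊗ₜ[ℂ] ((rR i).left j ⊗ₜ[ℂ] (rR i).right j))
          = ∑ j ∈ (rR i).index,
            μ ((r.left i * b) * (SS (SS ((rR i).right j)) * SS ((rR i).left j))) :=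
            Finset.sum_congr rfl fun j _ => Fpure _ _ _
        _ = μ ((r.left i * b) * ∑ j ∈ (rR i).index,
              SS (SS ((rR i).right j)) * SS ((rR i).left j)) := by
            rw [Finset.mul_sum, map_sum]
        _ = counit (R := ℂ) (r.right i) • μ (r.left i * b) := by
            rw [inner, mul_smul_comm, mul_one, map_smul]
    rw [Finset.sum_congr rfl fun i _ => perI i]
    have : ∑ i ∈ r.index, counit (R := ℂ) (r.right i) • μ (r.left i * b)
        = μ ((∑ i ∈ r.index, counit (R := ℂ) (r.right i) • r.left i) * b) := by
      rw [Finset.sum_mul, map_sum]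
      refine Finset.sum_congr rfl fun i _ => ?_
      rw [smul_mul_assoc, map_smul]
    rw [this, sum_counitR_smul r]
  rw [← hXb, ← mid, hXa]


variable {H : Type} [Ring H] [HopfAlgebra ℂ H]
variable {ι : Type} [Fintype ι] (aR bR : ι → H)

/-- `(Δ ⊗ id)(RR') = R₁₃ M₂₃ R'₁₃` in explicit form -/
lemma DeltaM
    (hR₁ : (∑ i, (Coalgebra.comul (R := ℂ) (aR i)) ⊗ₜ[ℂ] bR i)
        = ∑ i, ∑ j, (aR i ⊗ₜ[ℂ] aR j) ⊗ₜ[ℂ] (bR i * bR j))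
    (hR₂ : (∑ i, aR i ⊗ₜ[ℂ] (Coalgebra.comul (R := ℂ) (bR i)))
        = ∑ i, ∑ j, (aR i * aR j) ⊗ₜ[ℂ] (bR j ⊗ₜ[ℂ] bR i)) :
    ∑ i, ∑ j, (Coalgebra.comul (R := ℂ) (aR i * bR j)) ⊗ₜ[ℂ] (bR i * aR j)
      = ∑ i, ∑ k, ∑ p, ∑ q,
        ((aR i * bR q) ⊗ₜ[ℂ] (aR k * bR p)) ⊗ₜ[ℂ] ((bR i * bR k) * (aR p * aR q)) := by
  classical
  have hV : (∑ j, (Coalgebra.comul (R := ℂ) (bR j)) ⊗ₜ[ℂ] aR j)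
      = ∑ p, ∑ q, (bR q ⊗ₜ[ℂ] bR p) ⊗ₜ[ℂ] (aR p * aR q) := by
    have := congrArg (TensorProduct.comm ℂ H (H ⊗[ℂ] H)).toLinearMap hR₂
    rw [map_sum, map_sum] at this
    simp only [LinearEquiv.coe_coe, map_sum, TensorProduct.comm_tmul] at this
    exact this
  have key : ∑ i, ∑ j, (Coalgebra.comul (R := ℂ) (aR i * bR j)) ⊗ₜ[ℂ] (bR i * aR j)
      = (∑ i, (Coalgebra.comul (R := ℂ) (aR i)) ⊗ₜ[ℂ] bR i) *
        (∑ j, (Coalgebra.comul (R := ℂ) (bR j)) ⊗ₜ[ℂ] aR j) := by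
    rw [Finset.sum_mul_sum]
    refine Finset.sum_congr rfl fun i _ => Finset.sum_congr rfl fun j _ => ?_
    rw [Algebra.TensorProduct.tmul_mul_tmul, Bialgebra.comul_mul]
  rw [key, hR₁, hV, Finset.sum_mul]
  refine Finset.sum_congr rfl fun i _ => ?_
  rw [Finset.sum_mul]
  refine Finset.sum_congr rfl fun k _ => ?_
  rw [Finset.mul_sum]
  refine Finset.sum_congr rfl fun p _ => ?_
  rw [Finset.mul_sum]
  refine Finset.sum_congr rfl fun q _ => ?_
  rw [Algebra.TensorProduct.tmul_mul_tmul, Algebra.TensorProduct.tmul_mul_tmul]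


end DrinfeldAux

open Coalgebra HopfAlgebra DrinfeldAux in
theorem drinfeldMap_iso_SLF_to_center
    {H : Type} [Ring H] [HopfAlgebra ℂ H] [FiniteDimensional ℂ H]
    -- the antipode is invertible
    (Sinv : H →ₗ[ℂ] H)
    (hSinv₁ : ∀ x : H, Sinv (HopfAlgebra.antipode (R := ℂ) x) = x)
    (hSinv₂ : ∀ x : H, HopfAlgebra.antipode (R := ℂ) (Sinv x) = x)
    -- an invertible R-matrix `R = Σᵢ aᵢ ⊗ bᵢ`
    {ι : Type} [Fintype ι] (aR bR : ι → H)
    (hRinv : IsUnit (∑ i, aR i ⊗ₜ[ℂ] bR i : H ⊗[ℂ] H))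
    -- `R Δ(x) = Δᵒᵖ(x) R`
    (hRΔ : ∀ x : H,
      (∑ i, aR i ⊗ₜ[ℂ] bR i) * Coalgebra.comul (R := ℂ) x
        = (TensorProduct.comm ℂ H H) (Coalgebra.comul (R := ℂ) x)
            * ∑ i, aR i ⊗ₜ[ℂ] bR i)
    -- `(Δ ⊗ id)(R) = R₁₃ R₂₃`
    (hR₁ : (∑ i, (Coalgebra.comul (R := ℂ) (aR i)) ⊗ₜ[ℂ] bR i)
        = ∑ i, ∑ j, (aR i ⊗ₜ[ℂ] aR j) ⊗ₜ[ℂ] (bR i * bR j))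
    -- `(id ⊗ Δ)(R) = R₁₃ R₁₂`
    (hR₂ : (∑ i, aR i ⊗ₜ[ℂ] (Coalgebra.comul (R := ℂ) (bR i)))
        = ∑ i, ∑ j, (aR i * aR j) ⊗ₜ[ℂ] (bR j ⊗ₜ[ℂ] bR i))
    -- a ribbon element `v`
    (v vinv : H) (hv₁ : v * vinv = 1) (hv₂ : vinv * v = 1)
    (hvcentral : ∀ x : H, v * x = x * v)
    (hSv : HopfAlgebra.antipode (R := ℂ) v = v)
    (hεv : Coalgebra.counit (R := ℂ) v = 1)
    -- `Δ(v) = (R'R)⁻¹ (v ⊗ v)`, i.e. `R' R Δ(v) = v ⊗ v`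
    (hΔv : (∑ i, bR i ⊗ₜ[ℂ] aR i) * ((∑ i, aR i ⊗ₜ[ℂ] bR i)
            * Coalgebra.comul (R := ℂ) v) = v ⊗ₜ[ℂ] v)
    -- factorizability: `β ↦ (β ⊗ id)(RR')` is bijective
    (hfact : Function.Bijective fun β : Module.Dual ℂ H =>
        ∑ i, ∑ j, β (aR i * bR j) • (bR i * aR j))
    -- the pivotal element `g = u v⁻¹` where `u = Σᵢ S(bᵢ) aᵢ` is the Drinfeld element;
    -- `g` is invertible, grouplike and implements `S²`
    (g gi : H)
    (hg : g = (∑ i, HopfAlgebra.antipode (R := ℂ) (bR i) * aR i) * vinv)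
    (hgi₁ : g * gi = 1) (hgi₂ : gi * g = 1)
    (hggrouplike : Coalgebra.comul (R := ℂ) g = g ⊗ₜ[ℂ] g)
    (hgS₂ : ∀ x : H,
      HopfAlgebra.antipode (R := ℂ) (HopfAlgebra.antipode (R := ℂ) x) * g = g * x) :
    -- `D` is a linear isomorphism
    Function.Bijective (drinfeldMap aR bR g)
    -- `D` maps `SLF(H)` into the center
    ∧ (∀ φ : Module.Dual ℂ H, IsSLF φ → ∀ x : H,
        drinfeldMap aR bR g φ * x = x * drinfeldMap aR bR g φ)
    -- `D` maps `SLF(H)` onto the center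
    ∧ (∀ z : H, (∀ x : H, z * x = x * z) →
        ∃ φ : Module.Dual ℂ H, IsSLF φ ∧ drinfeldMap aR bR g φ = z)
    -- `D` is multiplicative on `SLF(H)`
    ∧ (∀ φ ψ : Module.Dual ℂ H, IsSLF φ → IsSLF ψ →
        drinfeldMap aR bR g (conv φ ψ)
          = drinfeldMap aR bR g φ * drinfeldMap aR bR g ψ)
    -- in particular `SLF(H)` is a commutative algebra
    ∧ (∀ φ ψ : Module.Dual ℂ H, IsSLF φ → IsSLF ψ → conv φ ψ = conv ψ φ) := by

  classical
  -- S² = g ⬝ gi conjugation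
  have hS2 : ∀ x : H, HopfAlgebra.antipode (R := ℂ)
      (HopfAlgebra.antipode (R := ℂ) x) = g * x * gi := by
    intro x
    calc HopfAlgebra.antipode (R := ℂ) (HopfAlgebra.antipode (R := ℂ) x)
        = HopfAlgebra.antipode (R := ℂ) (HopfAlgebra.antipode (R := ℂ) x) * (g * gi) := by
          rw [hgi₁, mul_one]
      _ = (HopfAlgebra.antipode (R := ℂ) (HopfAlgebra.antipode (R := ℂ) x) * g) * gi := by
          rw [mul_assoc]
      _ = g * x * gi := by rw [hgS₂]
  -- D = Phi ∘ T
  have hD : ∀ φ : Module.Dual ℂ H, drinfeldMap aR bR g φ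
      = Phi aR bR (φ ∘ₗ LinearMap.mulLeft ℂ g) := by
    intro φ
    unfold drinfeldMap Phi
    simp [LinearMap.mulLeft_apply]
  have hPhiBij : Function.Bijective (Phi aR bR (H := H)) := hfact
  have hPhiInj : Function.Injective (Phi aR bR (H := H)) := hPhiBij.1
  -- T bijective
  have hT : Function.Bijective (fun φ : Module.Dual ℂ H => φ ∘ₗ LinearMap.mulLeft ℂ g) := by
    rw [Function.bijective_iff_has_inverse]
    refine ⟨fun ψ => ψ ∘ₗ LinearMap.mulLeft ℂ gi, fun φ => ?_, fun ψ => ?_⟩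
    · ext x
      simp only [LinearMap.comp_apply, LinearMap.mulLeft_apply]
      rw [← mul_assoc, hgi₁, one_mul]
    · ext x
      simp only [LinearMap.comp_apply, LinearMap.mulLeft_apply]
      rw [← mul_assoc, hgi₂, one_mul]
  -- clause 1 : bijectivity
  have hDeq : drinfeldMap aR bR g
      = (Phi aR bR (H := H)) ∘ (fun φ : Module.Dual ℂ H => φ ∘ₗ LinearMap.mulLeft ℂ g) :=
    funext hD
  have hDbij : Function.Bijective (drinfeldMap aR bR g) := by
    rw [hDeq]; exact hPhiBij.comp hT
  -- SLF implies q-character for μ = φ(g·)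
  have qchar_of_slf : ∀ φ : Module.Dual ℂ H, IsSLF φ → ∀ x y : H,
      (φ ∘ₗ LinearMap.mulLeft ℂ g) (x * y)
        = (φ ∘ₗ LinearMap.mulLeft ℂ g) (y * (HopfAlgebra.antipode (R := ℂ)
            (HopfAlgebra.antipode (R := ℂ) x))) := by
    intro φ hφ x y
    simp only [LinearMap.comp_apply, LinearMap.mulLeft_apply, hS2 x]
    have e1 : g * (x * y) = (g * x) * y := by rw [mul_assoc]
    have e2 : g * (y * (g * x * gi)) = (g * y) * ((g * x) * gi) := by
      rw [mul_assoc, mul_assoc]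
    rw [e1, e2, hφ ((g * x) * gi) ((g * y)) |>.symm]
    rw [mul_assoc (g*x) gi (g*y), ← mul_assoc gi g y, hgi₂, one_mul]
  -- clause 2 : centrality
  have central : ∀ φ : Module.Dual ℂ H, IsSLF φ → ∀ x : H,
      drinfeldMap aR bR g φ * x = x * drinfeldMap aR bR g φ := by
    intro φ hφ
    set μ : Module.Dual ℂ H := φ ∘ₗ LinearMap.mulLeft ℂ g with hμ
    have hq : ∀ x y : H, μ (x * y) = μ (y * SS (SS x)) := qchar_of_slf φ hφ
    have hz : ∀ x : H, ∑ i ∈ (ℛ ℂ x).index,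
        SS ((ℛ ℂ x).left i) * (Phi aR bR μ) * (ℛ ℂ x).right i
          = counit (R := ℂ) x • Phi aR bR μ := by
      intro x
      rw [INT aR bR hRΔ μ (ℛ ℂ x)]
      have swap : ∑ k ∈ (ℛ ℂ x).index, ∑ i, ∑ j,
          μ ((ℛ ℂ x).left k * (aR i * bR j) * SS ((ℛ ℂ x).right k)) • (bR i * aR j)
          = ∑ i, ∑ j, ∑ k ∈ (ℛ ℂ x).index,
          μ ((ℛ ℂ x).left k * (aR i * bR j) * SS ((ℛ ℂ x).right k)) • (bR i * aR j) := by
        rw [Finset.sum_comm]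
        exact Finset.sum_congr rfl fun i _ => Finset.sum_comm
      rw [swap]
      have inner : ∀ i j, ∑ k ∈ (ℛ ℂ x).index,
          μ ((ℛ ℂ x).left k * (aR i * bR j) * SS ((ℛ ℂ x).right k)) • (bR i * aR j)
          = counit (R := ℂ) x • (μ (aR i * bR j) • (bR i * aR j)) := by
        intro i j
        rw [← Finset.sum_smul, coadInv_of_qchar μ hq (ℛ ℂ x) (aR i * bR j), mul_smul]
      rw [Finset.sum_congr rfl fun i _ => Finset.sum_congr rfl fun j _ => inner i j]
      rw [Phi]
      simp only [Finset.smul_sum]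
    intro x
    rw [hD φ]
    exact central_of_adInv (Phi aR bR μ) hz x
  -- clause 4 : multiplicativity
  have mult : ∀ φ ψ : Module.Dual ℂ H, IsSLF φ → IsSLF ψ →
      drinfeldMap aR bR g (conv φ ψ)
        = drinfeldMap aR bR g φ * drinfeldMap aR bR g ψ := by
    intro φ ψ hφ hψ
    have zψc : ∀ x : H, drinfeldMap aR bR g ψ * x = x * drinfeldMap aR bR g ψ :=
      central ψ hψ
    -- conv against a grouplike
    have convg : ∀ m : H, conv φ ψ (g * m) = ∑ k ∈ (ℛ ℂ m).index,
        φ (g * (ℛ ℂ m).left k) * ψ (g * (ℛ ℂ m).right k) := by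
      intro m
      show (LinearMap.mul' ℂ ℂ) ((TensorProduct.map φ ψ) (comul (R := ℂ) (g * m))) = _
      rw [Bialgebra.comul_mul, hggrouplike, ← (ℛ ℂ m).eq, Finset.mul_sum, map_sum, map_sum]
      refine Finset.sum_congr rfl fun k _ => ?_
      rw [Algebra.TensorProduct.tmul_mul_tmul, TensorProduct.map_tmul, LinearMap.mul'_apply]
    -- the evaluation map G
    set inner : H ⊗[ℂ] H →ₗ[ℂ] ℂ := (LinearMap.mul' ℂ ℂ) ∘ₗ
      TensorProduct.map (φ ∘ₗ LinearMap.mulLeft ℂ g) (ψ ∘ₗ LinearMap.mulLeft ℂ g) with hinner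
    set G : (H ⊗[ℂ] H) ⊗[ℂ] H →ₗ[ℂ] H :=
      (TensorProduct.lid ℂ H).toLinearMap ∘ₗ (LinearMap.rTensor H inner) with hG
    have Gpure : ∀ x y w : H, G ((x ⊗ₜ[ℂ] y) ⊗ₜ[ℂ] w)
        = (φ (g * x) * ψ (g * y)) • w := by
      intro x y w
      simp only [hG, hinner, LinearMap.comp_apply, LinearMap.rTensor_tmul,
        TensorProduct.map_tmul, LinearMap.mul'_apply, LinearEquiv.coe_coe,
        TensorProduct.lid_tmul, LinearMap.mulLeft_apply, smul_eq_mul]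
    have Gcom : ∀ m w : H, G ((comul (R := ℂ) m) ⊗ₜ[ℂ] w) = conv φ ψ (g * m) • w := by
      intro m w
      rw [← (ℛ ℂ m).eq, TensorProduct.sum_tmul, map_sum, convg m, Finset.sum_smul]
      exact Finset.sum_congr rfl fun k _ => Gpure _ _ _
    have key := DeltaM aR bR hR₁ hR₂
    apply_fun G at key
    rw [map_sum, map_sum] at key
    simp only [map_sum] at key
    have keyL : ∑ i, ∑ j, G ((comul (R := ℂ) (aR i * bR j)) ⊗ₜ[ℂ] (bR i * aR j))
        = drinfeldMap aR bR g (conv φ ψ) := by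
      unfold drinfeldMap
      exact Finset.sum_congr rfl fun i _ => Finset.sum_congr rfl fun j _ => Gcom _ _
    have keyR : ∑ i, ∑ k, ∑ p, ∑ q,
        G (((aR i * bR q) ⊗ₜ[ℂ] (aR k * bR p)) ⊗ₜ[ℂ] ((bR i * bR k) * (aR p * aR q)))
        = drinfeldMap aR bR g φ * drinfeldMap aR bR g ψ := by
      have inner1 : ∀ i q, ∑ k, ∑ p,
          G (((aR i * bR q) ⊗ₜ[ℂ] (aR k * bR p)) ⊗ₜ[ℂ] ((bR i * bR k) * (aR p * aR q)))
          = φ (g * (aR i * bR q)) •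
              (bR i * drinfeldMap aR bR g ψ * aR q) := by
        intro i q
        have e : ∀ k p, G (((aR i * bR q) ⊗ₜ[ℂ] (aR k * bR p)) ⊗ₜ[ℂ]
              ((bR i * bR k) * (aR p * aR q)))
            = φ (g * (aR i * bR q)) •
                (ψ (g * (aR k * bR p)) • (bR i * (bR k * aR p) * aR q)) := by
          intro k p
          rw [Gpure, mul_smul]
          congr 2
          simp only [mul_assoc]
        rw [Finset.sum_congr rfl fun k _ => Finset.sum_congr rfl fun p _ => e k p]
        simp only [← Finset.smul_sum]
        congr 1
        unfold drinfeldMap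
        rw [Finset.mul_sum, Finset.sum_mul]
        refine Finset.sum_congr rfl fun k _ => ?_
        rw [Finset.mul_sum, Finset.sum_mul]
        refine Finset.sum_congr rfl fun p _ => ?_
        rw [mul_smul_comm, smul_mul_assoc]
      have e2 : ∀ i q, φ (g * (aR i * bR q)) • (bR i * drinfeldMap aR bR g ψ * aR q)
          = φ (g * (aR i * bR q)) • ((bR i * aR q) * drinfeldMap aR bR g ψ) := by
        intro i q
        congr 1
        rw [mul_assoc, zψc (aR q), ← mul_assoc]
      calc ∑ i, ∑ k, ∑ p, ∑ q,
            G (((aR i * bR q) ⊗ₜ[ℂ] (aR k * bR p)) ⊗ₜ[ℂ] ((bR i * bR k) * (aR p * aR q)))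
          = ∑ i, ∑ q, ∑ k, ∑ p,
            G (((aR i * bR q) ⊗ₜ[ℂ] (aR k * bR p)) ⊗ₜ[ℂ] ((bR i * bR k) * (aR p * aR q))) := by
            refine Finset.sum_congr rfl fun i _ => ?_
            calc ∑ k : ι, ∑ p : ι, ∑ q : ι,
                  G (((aR i * bR q) ⊗ₜ[ℂ] (aR k * bR p)) ⊗ₜ[ℂ] ((bR i * bR k) * (aR p * aR q)))
                = ∑ k : ι, ∑ q : ι, ∑ p : ι,
                  G (((aR i * bR q) ⊗ₜ[ℂ] (aR k * bR p)) ⊗ₜ[ℂ] ((bR i * bR k) * (aR p * aR q))) :=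
                  Finset.sum_congr rfl fun k _ => Finset.sum_comm
              _ = ∑ q : ι, ∑ k : ι, ∑ p : ι,
                  G (((aR i * bR q) ⊗ₜ[ℂ] (aR k * bR p)) ⊗ₜ[ℂ] ((bR i * bR k) * (aR p * aR q))) :=
                  Finset.sum_comm
        _ = ∑ i, ∑ q, φ (g * (aR i * bR q)) • (bR i * drinfeldMap aR bR g ψ * aR q) :=
            Finset.sum_congr rfl fun i _ => Finset.sum_congr rfl fun q _ => inner1 i q
        _ = ∑ i, ∑ q, φ (g * (aR i * bR q)) • ((bR i * aR q) * drinfeldMap aR bR g ψ) :=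
            Finset.sum_congr rfl fun i _ => Finset.sum_congr rfl fun q _ => e2 i q
        _ = drinfeldMap aR bR g φ * drinfeldMap aR bR g ψ := by
            conv_rhs => rw [drinfeldMap]
            rw [Finset.sum_mul]
            refine Finset.sum_congr rfl fun i _ => ?_
            rw [Finset.sum_mul]
            refine Finset.sum_congr rfl fun q _ => ?_
            rw [smul_mul_assoc]
    rw [keyL, keyR] at key
    exact key
  -- clause 3 : onto the center
  have onto : ∀ z : H, (∀ x : H, z * x = x * z) →
      ∃ φ : Module.Dual ℂ H, IsSLF φ ∧ drinfeldMap aR bR g φ = z := by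
    intro z hzc
    obtain ⟨φ, hφz⟩ := hDbij.2 z
    refine ⟨φ, ?_, hφz⟩
    set μ : Module.Dual ℂ H := φ ∘ₗ LinearMap.mulLeft ℂ g with hμ
    have hzPhi : Phi aR bR μ = z := by rw [← hD φ]; exact hφz
    -- coadjoint invariance of μ from centrality of z
    have hinv : ∀ h w : H, ∑ i ∈ (ℛ ℂ h).index,
        μ ((ℛ ℂ h).left i * w * SS ((ℛ ℂ h).right i)) = counit (R := ℂ) h * μ w := by
      intro h
      set βh : Module.Dual ℂ H := ∑ k ∈ (ℛ ℂ h).index,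
        μ ∘ₗ (LinearMap.mulRight ℂ (SS ((ℛ ℂ h).right k)))
          ∘ₗ (LinearMap.mulLeft ℂ ((ℛ ℂ h).left k)) with hβh
      have happ : ∀ w : H, βh w = ∑ k ∈ (ℛ ℂ h).index,
          μ ((ℛ ℂ h).left k * w * SS ((ℛ ℂ h).right k)) := by
        intro w
        rw [hβh]
        rw [LinearMap.sum_apply]
        rfl
      have h1 : Phi aR bR βh = Phi aR bR (counit (R := ℂ) h • μ) := by
        have e1 : Phi aR bR βh = ∑ k ∈ (ℛ ℂ h).index, ∑ i, ∑ j,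
            μ ((ℛ ℂ h).left k * (aR i * bR j) * SS ((ℛ ℂ h).right k)) • (bR i * aR j) := by
          unfold Phi
          calc ∑ i, ∑ j, βh (aR i * bR j) • (bR i * aR j)
              = ∑ i, ∑ j, ∑ k ∈ (ℛ ℂ h).index,
                μ ((ℛ ℂ h).left k * (aR i * bR j) * SS ((ℛ ℂ h).right k)) • (bR i * aR j) := by
                refine Finset.sum_congr rfl fun i _ => Finset.sum_congr rfl fun j _ => ?_
                rw [happ, Finset.sum_smul]
            _ = ∑ i, ∑ k ∈ (ℛ ℂ h).index, ∑ j,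
                μ ((ℛ ℂ h).left k * (aR i * bR j) * SS ((ℛ ℂ h).right k)) • (bR i * aR j) :=
                Finset.sum_congr rfl fun i _ => Finset.sum_comm
            _ = ∑ k ∈ (ℛ ℂ h).index, ∑ i, ∑ j,
                μ ((ℛ ℂ h).left k * (aR i * bR j) * SS ((ℛ ℂ h).right k)) • (bR i * aR j) :=
                Finset.sum_comm
        have e2 : Phi aR bR (counit (R := ℂ) h • μ) = counit (R := ℂ) h • Phi aR bR μ := by
          unfold Phi
          rw [Finset.smul_sum]
          refine Finset.sum_congr rfl fun i _ => ?_
          rw [Finset.smul_sum]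
          refine Finset.sum_congr rfl fun j _ => ?_
          rw [LinearMap.smul_apply, smul_eq_mul, mul_smul]
        rw [e1, e2, ← INT aR bR hRΔ μ (ℛ ℂ h), hzPhi]
        exact adInv_of_central z hzc (ℛ ℂ h)
      have hβ : βh = counit (R := ℂ) h • μ := hPhiInj h1
      intro w
      rw [← happ w, hβ, LinearMap.smul_apply, smul_eq_mul]
    have hq : ∀ a b : H, μ (a * b) = μ (b * SS (SS a)) := qchar_of_coadInv μ hinv
    -- SLF from q-character
    have hφμ : ∀ w : H, φ w = μ (gi * w) := by
      intro w
      show φ w = φ (g * (gi * w))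
      rw [← mul_assoc, hgi₁, one_mul]
    have rel : ∀ x y : H, φ (x * y) = φ (g * (y * (x * gi))) := by
      intro x y
      rw [hφμ (x * y), ← mul_assoc gi x y, hq (gi * x) y, hS2 (gi * x)]
      show μ (y * (g * (gi * x) * gi)) = _
      rw [← mul_assoc g gi x, hgi₁, one_mul]
      rfl
    have conj : ∀ x : H, φ x = φ (g * (x * gi)) := by
      intro x
      have := rel x 1
      rw [mul_one, one_mul] at this
      exact this
    intro x y
    rw [rel x y, conj (y * x), mul_assoc y x gi]
  -- clause 5 : commutativity
  have comm5 : ∀ φ ψ : Module.Dual ℂ H, IsSLF φ → IsSLF ψ → conv φ ψ = conv ψ φ := by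
    intro φ ψ hφ hψ
    apply hDbij.1
    rw [mult φ ψ hφ hψ, mult ψ φ hψ hφ]
    exact central φ hφ (drinfeldMap aR bR g ψ)
  exact ⟨hDbij, central, onto, mult, comm5⟩
end
end

section
/- Define on H* the product φ ∗ ψ by (φ ∗ ψ)(x) = Σ_{i,j} φ(x'·b_j·S(b_i))·ψ(a_i·x''·a_j). Then the factorizability map Ψ : H* → H, Ψ(β) = (β ⊗ id)(RR'), satisfies Ψ(φ ∗ ψ) = Ψ(φ)·Ψ(ψ) and Ψ(ε) = 1, and it intertwines the actions: Ψ(φ(h'·?·S(h''))) = S(h')·Ψ(φ)·h'' for all h ∈ H and φ ∈ H*. Since Ψ is bijective, (H*, ∗, ε) is an associative unital algebra and Ψ is an algebra isomorphism onto H (this realizes the isomorphism of the loop algebra L_{0,1}(H) with H). -/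
/- STATEMENT 3: the loop-algebra product `∗` on `H*` and the isomorphism `Ψ : L_{0,1}(H) ≅ H`. -/

noncomputable section

open scoped TensorProduct
open TensorProduct

/-- The factorizability map `Ψ(β) = (β ⊗ id)(RR') = Σ_{i,j} β(aᵢ bⱼ) • bᵢ aⱼ`. -/
def PsiMap {H ι : Type} [Ring H] [Algebra ℂ H] [Fintype ι]
    (aR bR : ι → H) (β : Module.Dual ℂ H) : H :=
  ∑ i, ∑ j, β (aR i * bR j) • (bR i * aR j)

/-- The product of `L₀₁(H) ≅ F₀₁(H)`:
`(φ ∗ ψ)(x) = Σ_{i,j} φ(x' bⱼ S(bᵢ)) ψ(aᵢ x'' aⱼ)`. -/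
def starProd {H ι : Type} [Ring H] [HopfAlgebra ℂ H] [Fintype ι]
    (aR bR : ι → H) (φ ψ : Module.Dual ℂ H) : Module.Dual ℂ H :=
  ∑ i, ∑ j, conv
    (φ ∘ₗ LinearMap.mulRight ℂ (bR j * HopfAlgebra.antipode (R := ℂ) (bR i)))
    (ψ ∘ₗ LinearMap.mulLeft ℂ (aR i) ∘ₗ LinearMap.mulRight ℂ (aR j))


namespace LoopAux

variable {H : Type} [Ring H] [HopfAlgebra ℂ H]

local notation "ε" => Coalgebra.counit (R := ℂ)
local notation "Δ" => Coalgebra.comul (R := ℂ)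
local notation "𝒮" => HopfAlgebra.antipode (R := ℂ)

lemma comm_mul (u v : H ⊗[ℂ] H) : TensorProduct.comm ℂ H H (u*v)
    = TensorProduct.comm ℂ H H u * TensorProduct.comm ℂ H H v :=
  map_mul (Algebra.TensorProduct.comm ℂ H H) u v

/-- `x ⊗ y ↦ ε y • x`. -/
def ctrR : H ⊗[ℂ] H →ₗ[ℂ] H :=
  (TensorProduct.rid ℂ H).toLinearMap ∘ₗ (Coalgebra.counit (R := ℂ) (A := H)).lTensor H

@[simp] lemma ctrR_tmul (x y : H) : ctrR (x ⊗ₜ[ℂ] y) = ε y • x := by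
  simp [ctrR]

/-- `x ⊗ y ↦ ε x • y`. -/
def ctrL : H ⊗[ℂ] H →ₗ[ℂ] H :=
  (TensorProduct.lid ℂ H).toLinearMap ∘ₗ (Coalgebra.counit (R := ℂ) (A := H)).rTensor H

@[simp] lemma ctrL_tmul (x y : H) : ctrL (x ⊗ₜ[ℂ] y) = ε x • y := by
  simp [ctrL]

@[simp] lemma ctrR_comul (x : H) : ctrR (Δ x) = x := by
  simp [ctrR, Coalgebra.lTensor_counit_comul]

@[simp] lemma ctrL_comul (x : H) : ctrL (Δ x) = x := by
  simp [ctrL, Coalgebra.rTensor_counit_comul]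

variable {ι : Type} [Fintype ι]

/-- `(id ⊗ ε)(R) = 1`. -/
lemma hL1 (aR bR : ι → H)
    (hRinv : IsUnit (∑ i, aR i ⊗ₜ[ℂ] bR i : H ⊗[ℂ] H))
    (hR₂ : (∑ i, aR i ⊗ₜ[ℂ] (Δ (bR i)))
        = ∑ i, ∑ j, (aR i * aR j) ⊗ₜ[ℂ] (bR j ⊗ₜ[ℂ] bR i)) :
    ∑ i, ε (bR i) • aR i = (1 : H) := by
  have key := congrArg (LinearMap.lTensor H (ctrR (H := H))) hR₂
  simp only [map_sum, LinearMap.lTensor_tmul, ctrR_tmul, ctrR_comul] at key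
  have key2 : ((∑ i, ε (bR i) • aR i) ⊗ₜ[ℂ] (1:H)) * (∑ i, aR i ⊗ₜ[ℂ] bR i)
      = (∑ i, aR i ⊗ₜ[ℂ] bR i) := by
    conv_rhs => rw [key]
    rw [TensorProduct.sum_tmul, Finset.sum_mul_sum]
    refine Finset.sum_congr rfl fun i _ => Finset.sum_congr rfl fun j _ => ?_
    simp [Algebra.TensorProduct.tmul_mul_tmul, smul_mul_assoc, smul_tmul', tmul_smul]
  have key3 : ((∑ i, ε (bR i) • aR i) ⊗ₜ[ℂ] (1:H)) = (1 : H ⊗[ℂ] H) :=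
    hRinv.mul_right_cancel (key2.trans (one_mul _).symm)
  have := congrArg (ctrR (H := H)) key3
  simpa [Algebra.TensorProduct.one_def] using this

/-- `(ε ⊗ id)(R) = 1`. -/
lemma hL2 (aR bR : ι → H)
    (hRinv : IsUnit (∑ i, aR i ⊗ₜ[ℂ] bR i : H ⊗[ℂ] H))
    (hR₁ : (∑ i, (Δ (aR i)) ⊗ₜ[ℂ] bR i)
        = ∑ i, ∑ j, (aR i ⊗ₜ[ℂ] aR j) ⊗ₜ[ℂ] (bR i * bR j)) :
    ∑ i, ε (aR i) • bR i = (1 : H) := by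
  have key := congrArg (LinearMap.rTensor H (ctrL (H := H))) hR₁
  simp only [map_sum, LinearMap.rTensor_tmul, ctrL_tmul, ctrL_comul] at key
  have key2 : ((1:H) ⊗ₜ[ℂ] (∑ i, ε (aR i) • bR i)) * (∑ i, aR i ⊗ₜ[ℂ] bR i)
      = (∑ i, aR i ⊗ₜ[ℂ] bR i) := by
    conv_rhs => rw [key]
    rw [TensorProduct.tmul_sum, Finset.sum_mul_sum]
    refine Finset.sum_congr rfl fun i _ => Finset.sum_congr rfl fun j _ => ?_
    simp [Algebra.TensorProduct.tmul_mul_tmul, smul_mul_assoc, smul_tmul', tmul_smul]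
  have key3 : ((1:H) ⊗ₜ[ℂ] (∑ i, ε (aR i) • bR i)) = (1 : H ⊗[ℂ] H) :=
    hRinv.mul_right_cancel (key2.trans (one_mul _).symm)
  have := congrArg (ctrL (H := H)) key3
  simpa [Algebra.TensorProduct.one_def] using this


@[simp] lemma comm_comm (u : H ⊗[ℂ] H) :
    TensorProduct.comm ℂ H H (TensorProduct.comm ℂ H H u) = u := by
  induction u using TensorProduct.induction_on with
  | zero => simp
  | tmul x y => simp
  | add u v hu hv => simp [map_add, hu, hv]

/-- `Σ aᵢaⱼ ⊗ bⱼS(bᵢ) = 1 ⊗ 1`. -/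
lemma hL3a (aR bR : ι → H)
    (hRinv : IsUnit (∑ i, aR i ⊗ₜ[ℂ] bR i : H ⊗[ℂ] H))
    (hR₂ : (∑ i, aR i ⊗ₜ[ℂ] (Δ (bR i)))
        = ∑ i, ∑ j, (aR i * aR j) ⊗ₜ[ℂ] (bR j ⊗ₜ[ℂ] bR i)) :
    ∑ i, ∑ j, (aR i * aR j) ⊗ₜ[ℂ] (bR j * 𝒮 (bR i)) = (1 : H ⊗[ℂ] H) := by
  have key := congrArg (LinearMap.lTensor H
    (LinearMap.mul' ℂ H ∘ₗ (HopfAlgebra.antipode (R := ℂ) (A := H)).lTensor H)) hR₂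
  simp only [map_sum, LinearMap.lTensor_tmul, LinearMap.coe_comp, Function.comp_apply,
    LinearMap.mul'_apply] at key
  rw [← key]
  have : ∀ i : ι, aR i ⊗ₜ[ℂ] (LinearMap.mul' ℂ H
      ((HopfAlgebra.antipode (R := ℂ) (A := H)).lTensor H (Δ (bR i))))
      = ε (bR i) • (aR i ⊗ₜ[ℂ] (1:H)) := by
    intro i
    rw [HopfAlgebra.mul_antipode_lTensor_comul_apply]
    rw [Algebra.algebraMap_eq_smul_one, tmul_smul]
  rw [Finset.sum_congr rfl (fun i _ => this i)]
  have h1 := hL1 aR bR hRinv hR₂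
  calc ∑ i, ε (bR i) • (aR i ⊗ₜ[ℂ] (1:H))
      = (∑ i, ε (bR i) • aR i) ⊗ₜ[ℂ] (1:H) := by
        rw [TensorProduct.sum_tmul]
        exact Finset.sum_congr rfl fun i _ => (smul_tmul' _ _ _).symm
    _ = (1:H) ⊗ₜ[ℂ] (1:H) := by rw [h1]
    _ = 1 := (Algebra.TensorProduct.one_def).symm

/-- `Σ bⱼS(bᵢ) ⊗ aᵢaⱼ = 1 ⊗ 1`. -/
lemma hL3 (aR bR : ι → H)
    (hRinv : IsUnit (∑ i, aR i ⊗ₜ[ℂ] bR i : H ⊗[ℂ] H))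
    (hR₂ : (∑ i, aR i ⊗ₜ[ℂ] (Δ (bR i)))
        = ∑ i, ∑ j, (aR i * aR j) ⊗ₜ[ℂ] (bR j ⊗ₜ[ℂ] bR i)) :
    ∑ i, ∑ j, (bR j * 𝒮 (bR i)) ⊗ₜ[ℂ] (aR i * aR j) = (1 : H ⊗[ℂ] H) := by
  have key := congrArg (TensorProduct.comm ℂ H H) (hL3a aR bR hRinv hR₂)
  simpa [map_sum, Algebra.TensorProduct.one_def] using key

/-- permuted hexagon: `Σ bₚ ⊗ τ(Δ aₚ) = Σ bᵢbⱼ ⊗ (aⱼ ⊗ aᵢ)`. -/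
lemma hD7 (aR bR : ι → H)
    (hR₁ : (∑ i, (Δ (aR i)) ⊗ₜ[ℂ] bR i)
        = ∑ i, ∑ j, (aR i ⊗ₜ[ℂ] aR j) ⊗ₜ[ℂ] (bR i * bR j)) :
    ∑ p, bR p ⊗ₜ[ℂ] (TensorProduct.comm ℂ H H (Δ (aR p)))
      = ∑ i, ∑ j, (bR i * bR j) ⊗ₜ[ℂ] (aR j ⊗ₜ[ℂ] aR i) := by
  have key := congrArg ((TensorProduct.comm ℂ (H ⊗[ℂ] H) H).toLinearMap ∘ₗ
    LinearMap.rTensor H (TensorProduct.comm ℂ H H).toLinearMap) hR₁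
  simpa [map_sum, LinearMap.rTensor_tmul] using key

/-- `M := R·τ(R)` commutes with `τ(Δ x)`. -/
lemma hM (aR bR : ι → H)
    (hRΔ : ∀ x : H,
      (∑ i, aR i ⊗ₜ[ℂ] bR i) * Δ x
        = (TensorProduct.comm ℂ H H) (Δ x) * ∑ i, aR i ⊗ₜ[ℂ] bR i) (x : H) :
    ((∑ i, aR i ⊗ₜ[ℂ] bR i) * TensorProduct.comm ℂ H H (∑ i, aR i ⊗ₜ[ℂ] bR i))
        * TensorProduct.comm ℂ H H (Δ x)
      = TensorProduct.comm ℂ H H (Δ x) *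
        ((∑ i, aR i ⊗ₜ[ℂ] bR i) * TensorProduct.comm ℂ H H (∑ i, aR i ⊗ₜ[ℂ] bR i)) := by
  have h' : TensorProduct.comm ℂ H H (∑ i, aR i ⊗ₜ[ℂ] bR i) * TensorProduct.comm ℂ H H (Δ x)
      = Δ x * TensorProduct.comm ℂ H H (∑ i, aR i ⊗ₜ[ℂ] bR i) := by
    have := congrArg (TensorProduct.comm ℂ H H) (hRΔ x)
    rw [comm_mul, comm_mul, comm_comm] at this
    exact this
  rw [mul_assoc, h', ← mul_assoc, hRΔ x, mul_assoc]


local notation "M[" aR "," bR "]" => ∑ l, ∑ m, (aR l * bR m) ⊗ₜ[ℂ] (bR l * aR m)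

lemma hMdef (aR bR : ι → H) :
    M[aR,bR] = (∑ i, aR i ⊗ₜ[ℂ] bR i) *
      TensorProduct.comm ℂ H H (∑ i, aR i ⊗ₜ[ℂ] bR i) := by
  rw [map_sum, Finset.sum_mul_sum]
  refine Finset.sum_congr rfl fun l _ => Finset.sum_congr rfl fun m _ => ?_
  simp [Algebra.TensorProduct.tmul_mul_tmul]

lemma hMj (aR bR : ι → H)
    (hRΔ : ∀ x : H,
      (∑ i, aR i ⊗ₜ[ℂ] bR i) * Δ x
        = (TensorProduct.comm ℂ H H) (Δ x) * ∑ i, aR i ⊗ₜ[ℂ] bR i) (x : H) :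
    M[aR,bR] * TensorProduct.comm ℂ H H (Δ x)
      = TensorProduct.comm ℂ H H (Δ x) * M[aR,bR] := by
  rw [hMdef]; exact hM aR bR hRΔ x

/-- `Mc * TT = TT * Mc` in `H ⊗ (H ⊗ H)`. -/
lemma hTT (aR bR : ι → H)
    (hRΔ : ∀ x : H,
      (∑ i, aR i ⊗ₜ[ℂ] bR i) * Δ x
        = (TensorProduct.comm ℂ H H) (Δ x) * ∑ i, aR i ⊗ₜ[ℂ] bR i)
    (hR₁ : (∑ i, (Δ (aR i)) ⊗ₜ[ℂ] bR i)
        = ∑ i, ∑ j, (aR i ⊗ₜ[ℂ] aR j) ⊗ₜ[ℂ] (bR i * bR j)) :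
    ((1:H) ⊗ₜ[ℂ] (M[aR,bR])) * (∑ j, ∑ n, (bR n * bR j) ⊗ₜ[ℂ] (aR j ⊗ₜ[ℂ] aR n))
      = (∑ j, ∑ n, (bR n * bR j) ⊗ₜ[ℂ] (aR j ⊗ₜ[ℂ] aR n)) * ((1:H) ⊗ₜ[ℂ] (M[aR,bR])) := by
  have hMM := hMdef aR bR
  have hTTD : (∑ j, ∑ n, (bR n * bR j) ⊗ₜ[ℂ] (aR j ⊗ₜ[ℂ] aR n))
      = ∑ p, bR p ⊗ₜ[ℂ] (TensorProduct.comm ℂ H H (Δ (aR p))) := by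
    rw [Finset.sum_comm]
    exact (hD7 aR bR hR₁).symm
  rw [hTTD, Finset.mul_sum, Finset.sum_mul]
  refine Finset.sum_congr rfl fun p _ => ?_
  rw [Algebra.TensorProduct.tmul_mul_tmul, Algebra.TensorProduct.tmul_mul_tmul,
    one_mul, mul_one, hMM, hM aR bR hRΔ (aR p)]

/-- collapse of the `i,j` sums: `Σ G_i · (TT · F_i) = R'₁₃`. -/
lemma hW (aR bR : ι → H)
    (hRinv : IsUnit (∑ i, aR i ⊗ₜ[ℂ] bR i : H ⊗[ℂ] H))
    (hR₂ : (∑ i, aR i ⊗ₜ[ℂ] (Δ (bR i)))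
        = ∑ i, ∑ j, (aR i * aR j) ⊗ₜ[ℂ] (bR j ⊗ₜ[ℂ] bR i)) :
    ∑ i, ((1:H) ⊗ₜ[ℂ] (aR i ⊗ₜ[ℂ] (1:H))) *
        ((∑ j, ∑ n, (bR n * bR j) ⊗ₜ[ℂ] (aR j ⊗ₜ[ℂ] aR n)) *
          (𝒮 (bR i) ⊗ₜ[ℂ] ((1:H) ⊗ₜ[ℂ] (1:H))))
      = ∑ n, bR n ⊗ₜ[ℂ] ((1:H) ⊗ₜ[ℂ] aR n) := by
  -- expand to triple sums and reorder to `n, i, j`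
  have step1 : ∀ i, ((1:H) ⊗ₜ[ℂ] (aR i ⊗ₜ[ℂ] (1:H))) *
        ((∑ j, ∑ n, (bR n * bR j) ⊗ₜ[ℂ] (aR j ⊗ₜ[ℂ] aR n)) *
          (𝒮 (bR i) ⊗ₜ[ℂ] ((1:H) ⊗ₜ[ℂ] (1:H))))
      = ∑ j, ∑ n, (bR n ⊗ₜ[ℂ] ((1:H) ⊗ₜ[ℂ] aR n)) *
          ((bR j * 𝒮 (bR i)) ⊗ₜ[ℂ] ((aR i * aR j) ⊗ₜ[ℂ] (1:H))) := by
    intro i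
    rw [Finset.sum_mul, Finset.mul_sum]
    refine Finset.sum_congr rfl fun j _ => ?_
    rw [Finset.sum_mul, Finset.mul_sum]
    refine Finset.sum_congr rfl fun n _ => ?_
    simp [Algebra.TensorProduct.tmul_mul_tmul, mul_assoc]
  rw [Finset.sum_congr rfl fun i _ => step1 i]
  rw [Finset.sum_comm]  -- i <-> j
  rw [Finset.sum_congr rfl fun j _ => Finset.sum_comm]  -- i <-> n inside j
  rw [Finset.sum_comm]  -- j <-> n
  rw [Finset.sum_congr rfl fun n _ => Finset.sum_comm]  -- i <-> j inside n
  have step2 : ∀ n, ∑ i, ∑ j, (bR n ⊗ₜ[ℂ] ((1:H) ⊗ₜ[ℂ] aR n)) *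
          ((bR j * 𝒮 (bR i)) ⊗ₜ[ℂ] ((aR i * aR j) ⊗ₜ[ℂ] (1:H)))
      = bR n ⊗ₜ[ℂ] ((1:H) ⊗ₜ[ℂ] aR n) := by
    intro n
    have : ∑ i, ∑ j, (bR n ⊗ₜ[ℂ] ((1:H) ⊗ₜ[ℂ] aR n)) *
          ((bR j * 𝒮 (bR i)) ⊗ₜ[ℂ] ((aR i * aR j) ⊗ₜ[ℂ] (1:H)))
        = (bR n ⊗ₜ[ℂ] ((1:H) ⊗ₜ[ℂ] aR n)) *
          ((TensorProduct.map LinearMap.id ((TensorProduct.mk ℂ H H).flip 1))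
            (∑ i, ∑ j, (bR j * 𝒮 (bR i)) ⊗ₜ[ℂ] (aR i * aR j))) := by
      rw [map_sum, Finset.mul_sum]
      refine Finset.sum_congr rfl fun i _ => ?_
      rw [map_sum, Finset.mul_sum]
      refine Finset.sum_congr rfl fun j _ => ?_
      simp [TensorProduct.map_tmul]
    rw [this, hL3 aR bR hRinv hR₂, Algebra.TensorProduct.one_def]
    simp [TensorProduct.map_tmul, Algebra.TensorProduct.tmul_mul_tmul]
  rw [Finset.sum_congr rfl fun n _ => step2 n]


/-- The central tensor identity `Y = Z` in `H ⊗ (H ⊗ H)`. -/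
lemma hKEY (aR bR : ι → H)
    (hRinv : IsUnit (∑ i, aR i ⊗ₜ[ℂ] bR i : H ⊗[ℂ] H))
    (hRΔ : ∀ x : H,
      (∑ i, aR i ⊗ₜ[ℂ] bR i) * Δ x
        = (TensorProduct.comm ℂ H H) (Δ x) * ∑ i, aR i ⊗ₜ[ℂ] bR i)
    (hR₁ : (∑ i, (Δ (aR i)) ⊗ₜ[ℂ] bR i)
        = ∑ i, ∑ j, (aR i ⊗ₜ[ℂ] aR j) ⊗ₜ[ℂ] (bR i * bR j))
    (hR₂ : (∑ i, aR i ⊗ₜ[ℂ] (Δ (bR i)))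
        = ∑ i, ∑ j, (aR i * aR j) ⊗ₜ[ℂ] (bR j ⊗ₜ[ℂ] bR i)) :
    ∑ i, ∑ j, ∑ k, ∑ l, ∑ m, ∑ n,
      ((aR k * bR n) * (bR j * 𝒮 (bR i))) ⊗ₜ[ℂ]
        ((aR i * ((aR l * bR m) * aR j)) ⊗ₜ[ℂ] ((bR k * bR l) * (aR m * aR n)))
    = ∑ k, ∑ n, ∑ l, ∑ m,
      (aR k * bR n) ⊗ₜ[ℂ]
        ((aR l * bR m) ⊗ₜ[ℂ] ((bR k * aR n) * (bR l * aR m))) := by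
  -- abbreviations
  set TT : H ⊗[ℂ] (H ⊗[ℂ] H) := ∑ j, ∑ n, (bR n * bR j) ⊗ₜ[ℂ] (aR j ⊗ₜ[ℂ] aR n) with hTTdef
  set R13 : H ⊗[ℂ] (H ⊗[ℂ] H) := ∑ k, aR k ⊗ₜ[ℂ] ((1:H) ⊗ₜ[ℂ] bR k) with hR13def
  set Mc : H ⊗[ℂ] (H ⊗[ℂ] H) := (1:H) ⊗ₜ[ℂ] (M[aR,bR]) with hMcdef
  -- Step 1: regroup the left-hand side
  have step1 : ∑ i, ∑ j, ∑ k, ∑ l, ∑ m, ∑ n,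
      ((aR k * bR n) * (bR j * 𝒮 (bR i))) ⊗ₜ[ℂ]
        ((aR i * ((aR l * bR m) * aR j)) ⊗ₜ[ℂ] ((bR k * bR l) * (aR m * aR n)))
      = ∑ i, ((1:H) ⊗ₜ[ℂ] (aR i ⊗ₜ[ℂ] (1:H))) *
          (R13 * (Mc * (TT * (𝒮 (bR i) ⊗ₜ[ℂ] ((1:H) ⊗ₜ[ℂ] (1:H)))))) := by
    have perm : ∑ i, ∑ j, ∑ k, ∑ l, ∑ m, ∑ n,
        ((aR k * bR n) * (bR j * 𝒮 (bR i))) ⊗ₜ[ℂ]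
          ((aR i * ((aR l * bR m) * aR j)) ⊗ₜ[ℂ] ((bR k * bR l) * (aR m * aR n)))
        = ∑ i, ∑ j, ∑ n, ∑ l, ∑ m, ∑ k,
        ((aR k * bR n) * (bR j * 𝒮 (bR i))) ⊗ₜ[ℂ]
          ((aR i * ((aR l * bR m) * aR j)) ⊗ₜ[ℂ] ((bR k * bR l) * (aR m * aR n))) :=
      Finset.sum_congr rfl fun i _ => Finset.sum_congr rfl fun j _ =>
        (Finset.sum_comm.trans <|
          (Finset.sum_congr rfl fun l _ => Finset.sum_comm.trans <|
            Finset.sum_congr rfl fun m _ => Finset.sum_comm).trans <|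
          (Finset.sum_congr rfl fun l _ => Finset.sum_comm).trans Finset.sum_comm)
    rw [perm, hTTdef, hR13def, hMcdef]
    refine Finset.sum_congr rfl fun i _ => ?_
    simp only [Finset.mul_sum, Finset.sum_mul, TensorProduct.tmul_sum,
      TensorProduct.sum_tmul]
    refine Finset.sum_congr rfl fun j _ => Finset.sum_congr rfl fun n _ =>
      Finset.sum_congr rfl fun l _ => Finset.sum_congr rfl fun m _ =>
      Finset.sum_congr rfl fun k _ => ?_
    simp [Algebra.TensorProduct.tmul_mul_tmul, mul_assoc]
  rw [step1]
  -- Step 2: commute `Mc` to the right and `R13` to the left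
  have hMcF : ∀ i, Mc * (𝒮 (bR i) ⊗ₜ[ℂ] ((1:H) ⊗ₜ[ℂ] (1:H)))
      = (𝒮 (bR i) ⊗ₜ[ℂ] ((1:H) ⊗ₜ[ℂ] (1:H))) * Mc := by
    intro i
    rw [hMcdef]
    simp only [Algebra.TensorProduct.tmul_mul_tmul, ← Algebra.TensorProduct.one_def,
      one_mul, mul_one]
  have hGR : ∀ i, ((1:H) ⊗ₜ[ℂ] (aR i ⊗ₜ[ℂ] (1:H))) * R13
      = R13 * ((1:H) ⊗ₜ[ℂ] (aR i ⊗ₜ[ℂ] (1:H))) := by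
    intro i
    rw [hR13def, Finset.mul_sum, Finset.sum_mul]
    refine Finset.sum_congr rfl fun k _ => ?_
    simp [Algebra.TensorProduct.tmul_mul_tmul]
  have hTTC : Mc * TT = TT * Mc := hTT aR bR hRΔ hR₁
  have step2 : ∀ i, ((1:H) ⊗ₜ[ℂ] (aR i ⊗ₜ[ℂ] (1:H))) *
          (R13 * (Mc * (TT * (𝒮 (bR i) ⊗ₜ[ℂ] ((1:H) ⊗ₜ[ℂ] (1:H))))))
      = R13 *
          ((((1:H) ⊗ₜ[ℂ] (aR i ⊗ₜ[ℂ] (1:H))) *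
            (TT * (𝒮 (bR i) ⊗ₜ[ℂ] ((1:H) ⊗ₜ[ℂ] (1:H))))) * Mc) := by
    intro i
    rw [show Mc * (TT * (𝒮 (bR i) ⊗ₜ[ℂ] ((1:H) ⊗ₜ[ℂ] (1:H))))
        = (TT * (𝒮 (bR i) ⊗ₜ[ℂ] ((1:H) ⊗ₜ[ℂ] (1:H)))) * Mc by
      rw [← mul_assoc, hTTC, mul_assoc, hMcF i, ← mul_assoc]]
    rw [← mul_assoc, ← mul_assoc, hGR i, mul_assoc, mul_assoc, ← mul_assoc
      (((1:H) ⊗ₜ[ℂ] (aR i ⊗ₜ[ℂ] (1:H))))]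
  rw [Finset.sum_congr rfl fun i _ => step2 i]
  rw [← Finset.mul_sum, ← Finset.sum_mul, hW aR bR hRinv hR₂]
  -- Step 3: final evaluation
  rw [hR13def, Finset.sum_mul]
  refine Finset.sum_congr rfl fun k _ => ?_
  rw [Finset.sum_mul, Finset.mul_sum]
  refine Finset.sum_congr rfl fun n _ => ?_
  rw [hMcdef]
  simp only [TensorProduct.tmul_sum, Finset.mul_sum]
  refine Finset.sum_congr rfl fun l _ => Finset.sum_congr rfl fun m _ => ?_
  simp [Algebra.TensorProduct.tmul_mul_tmul, mul_assoc]


/-! ### Convolution algebra of maps `H →ₗ H ⊗ H` -/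

/-- Convolution product. -/
def cstar (f g : H →ₗ[ℂ] H ⊗[ℂ] H) : H →ₗ[ℂ] H ⊗[ℂ] H :=
  LinearMap.mul' ℂ (H ⊗[ℂ] H) ∘ₗ TensorProduct.map f g ∘ₗ Coalgebra.comul (R := ℂ)

lemma cstar_repr (f g : H →ₗ[ℂ] H ⊗[ℂ] H) {h : H} {κ : Type*} (r : Coalgebra.Repr ℂ h κ) :
    cstar f g h = ∑ i ∈ r.index, f (r.left i) * g (r.right i) := by
  simp only [cstar, LinearMap.coe_comp, Function.comp_apply, ← r.eq, map_sum,
    TensorProduct.map_tmul, LinearMap.mul'_apply]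

lemma repr_counit_right {h : H} {κ : Type*} (r : Coalgebra.Repr ℂ h κ) :
    ∑ i ∈ r.index, ε (r.right i) • r.left i = h := by
  have e : (TensorProduct.rid ℂ H) (∑ i ∈ r.index, (r.left i) ⊗ₜ[ℂ] ε (r.right i))
      = ∑ i ∈ r.index, ε (r.right i) • r.left i := by
    rw [map_sum]
    exact Finset.sum_congr rfl fun i _ => TensorProduct.rid_tmul _ _
  rw [← e, Coalgebra.sum_tmul_counit_eq r, TensorProduct.rid_tmul, one_smul]

lemma repr_counit_left {h : H} {κ : Type*} (r : Coalgebra.Repr ℂ h κ) :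
    ∑ i ∈ r.index, ε (r.left i) • r.right i = h := by
  have e : (TensorProduct.lid ℂ H) (∑ i ∈ r.index, (ε (r.left i) : ℂ) ⊗ₜ[ℂ] r.right i)
      = ∑ i ∈ r.index, ε (r.left i) • r.right i := by
    rw [map_sum]
    exact Finset.sum_congr rfl fun i _ => TensorProduct.lid_tmul _ _
  rw [← e, Coalgebra.sum_counit_tmul_eq r, TensorProduct.lid_tmul, one_smul]

lemma cstar_assoc (f g k : H →ₗ[ℂ] H ⊗[ℂ] H) :
    cstar (cstar f g) k = cstar f (cstar g k) := by
  ext h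
  set r := Coalgebra.Repr.arbitrary ℂ h with hr
  have key := Coalgebra.sum_map_tmul_tmul_eq (R := ℂ) (A := H) f g k h
    (repr := r) (a₁ := fun i => Coalgebra.Repr.arbitrary ℂ (r.left i))
    (a₂ := fun i => Coalgebra.Repr.arbitrary ℂ (r.right i))
  have key2 := congrArg (LinearMap.mul' ℂ (H ⊗[ℂ] H) ∘ₗ
    (LinearMap.mul' ℂ (H ⊗[ℂ] H)).lTensor (H ⊗[ℂ] H)) key
  simp only [map_sum, LinearMap.coe_comp, Function.comp_apply, LinearMap.lTensor_tmul,
    LinearMap.mul'_apply] at key2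
  calc cstar (cstar f g) k h
      = ∑ i ∈ r.index, cstar f g (r.left i) * k (r.right i) := cstar_repr _ _ r
    _ = ∑ i ∈ r.index, ∑ j ∈ (Coalgebra.Repr.arbitrary ℂ (r.left i)).index,
          f ((Coalgebra.Repr.arbitrary ℂ (r.left i)).left j) *
            g ((Coalgebra.Repr.arbitrary ℂ (r.left i)).right j) * k (r.right i) := by
        refine Finset.sum_congr rfl fun i _ => ?_
        rw [cstar_repr f g (Coalgebra.Repr.arbitrary ℂ (r.left i)), Finset.sum_mul]
    _ = ∑ i ∈ r.index, ∑ j ∈ (Coalgebra.Repr.arbitrary ℂ (r.right i)).index,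
          f (r.left i) * (g ((Coalgebra.Repr.arbitrary ℂ (r.right i)).left j) *
            k ((Coalgebra.Repr.arbitrary ℂ (r.right i)).right j)) := by
        rw [key2]
        exact Finset.sum_congr rfl fun i _ => Finset.sum_congr rfl fun j _ =>
          mul_assoc _ _ _
    _ = ∑ i ∈ r.index, f (r.left i) * cstar g k (r.right i) := by
        refine Finset.sum_congr rfl fun i _ => ?_
        rw [cstar_repr g k (Coalgebra.Repr.arbitrary ℂ (r.right i)), Finset.mul_sum]
    _ = cstar f (cstar g k) h := (cstar_repr _ _ r).symm


/-- `x ↦ x ⊗ 1`. -/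
def io1 : H →ₗ[ℂ] H ⊗[ℂ] H := (TensorProduct.mk ℂ H H).flip 1
/-- `x ↦ 1 ⊗ x`. -/
def io2 : H →ₗ[ℂ] H ⊗[ℂ] H := TensorProduct.mk ℂ H H 1

@[simp] lemma io1_apply (x : H) : io1 x = x ⊗ₜ[ℂ] 1 := rfl
@[simp] lemma io2_apply (x : H) : io2 x = (1:H) ⊗ₜ[ℂ] x := rfl

/-- constant `u` against the counit: `h ↦ ε h • u`. -/
def cu (u : H ⊗[ℂ] H) : H →ₗ[ℂ] H ⊗[ℂ] H :=
  LinearMap.toSpanSingleton ℂ _ u ∘ₗ Coalgebra.counit (R := ℂ)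

@[simp] lemma cu_apply (u : H ⊗[ℂ] H) (x : H) : cu u x = ε x • u := rfl

/-- `h ↦ τ(Δ h)`. -/
def jmap : H →ₗ[ℂ] H ⊗[ℂ] H :=
  (TensorProduct.comm ℂ H H).toLinearMap ∘ₗ Coalgebra.comul (R := ℂ)

lemma cstar_cu_right (g : H →ₗ[ℂ] H ⊗[ℂ] H) (u : H ⊗[ℂ] H) :
    cstar g (cu u) = LinearMap.mulRight ℂ u ∘ₗ g := by
  ext h
  rw [LinearMap.comp_apply, cstar_repr g (cu u) (Coalgebra.Repr.arbitrary ℂ h),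
    LinearMap.mulRight_apply]
  calc ∑ i ∈ _, g ((Coalgebra.Repr.arbitrary ℂ h).left i) *
        (ε ((Coalgebra.Repr.arbitrary ℂ h).right i) • u)
      = ∑ i ∈ (Coalgebra.Repr.arbitrary ℂ h).index,
          g (ε ((Coalgebra.Repr.arbitrary ℂ h).right i) •
            (Coalgebra.Repr.arbitrary ℂ h).left i) * u := by
        refine Finset.sum_congr rfl fun i _ => ?_
        rw [map_smul, smul_mul_assoc, mul_smul_comm]
    _ = g h * u := by
        rw [← Finset.sum_mul, ← map_sum, repr_counit_right]

lemma cstar_cu_left (g : H →ₗ[ℂ] H ⊗[ℂ] H) (u : H ⊗[ℂ] H) :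
    cstar (cu u) g = LinearMap.mulLeft ℂ u ∘ₗ g := by
  ext h
  rw [LinearMap.comp_apply, cstar_repr (cu u) g (Coalgebra.Repr.arbitrary ℂ h),
    LinearMap.mulLeft_apply]
  calc ∑ i ∈ _, (ε ((Coalgebra.Repr.arbitrary ℂ h).left i) • u) *
        g ((Coalgebra.Repr.arbitrary ℂ h).right i)
      = ∑ i ∈ (Coalgebra.Repr.arbitrary ℂ h).index,
          u * g (ε ((Coalgebra.Repr.arbitrary ℂ h).left i) •
            (Coalgebra.Repr.arbitrary ℂ h).right i) := by
        refine Finset.sum_congr rfl fun i _ => ?_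
        rw [map_smul, smul_mul_assoc, mul_smul_comm]
    _ = u * g h := by
        rw [← Finset.mul_sum, ← map_sum, repr_counit_left]

lemma cstar_io1_S : cstar (io1 (H := H)) (io1 ∘ₗ HopfAlgebra.antipode (R := ℂ)) = cu 1 := by
  ext h
  rw [cstar_repr _ _ (Coalgebra.Repr.arbitrary ℂ h), cu_apply]
  calc ∑ i ∈ _, io1 ((Coalgebra.Repr.arbitrary ℂ h).left i) *
        (io1 ∘ₗ HopfAlgebra.antipode (R := ℂ)) ((Coalgebra.Repr.arbitrary ℂ h).right i)
      = (∑ i ∈ (Coalgebra.Repr.arbitrary ℂ h).index,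
          (Coalgebra.Repr.arbitrary ℂ h).left i *
            𝒮 ((Coalgebra.Repr.arbitrary ℂ h).right i)) ⊗ₜ[ℂ] (1:H) := by
        rw [TensorProduct.sum_tmul]
        exact Finset.sum_congr rfl fun i _ => by
          simp [Algebra.TensorProduct.tmul_mul_tmul]
    _ = ε h • (1 : H ⊗[ℂ] H) := by
        rw [HopfAlgebra.sum_mul_antipode_eq_smul (Coalgebra.Repr.arbitrary ℂ h),
          Algebra.TensorProduct.one_def, smul_tmul']
    _ = ε h • (1 : H ⊗[ℂ] H) := rfl

lemma cstar_S_io2 : cstar (io2 ∘ₗ HopfAlgebra.antipode (R := ℂ)) (io2 (H := H)) = cu 1 := by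
  ext h
  rw [cstar_repr _ _ (Coalgebra.Repr.arbitrary ℂ h), cu_apply]
  calc ∑ i ∈ _, (io2 ∘ₗ HopfAlgebra.antipode (R := ℂ))
          ((Coalgebra.Repr.arbitrary ℂ h).left i) *
        io2 ((Coalgebra.Repr.arbitrary ℂ h).right i)
      = (1:H) ⊗ₜ[ℂ] (∑ i ∈ (Coalgebra.Repr.arbitrary ℂ h).index,
          𝒮 ((Coalgebra.Repr.arbitrary ℂ h).left i) *
            (Coalgebra.Repr.arbitrary ℂ h).right i) := by
        rw [TensorProduct.tmul_sum]
        exact Finset.sum_congr rfl fun i _ => by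
          simp [Algebra.TensorProduct.tmul_mul_tmul]
    _ = ε h • (1 : H ⊗[ℂ] H) := by
        rw [HopfAlgebra.sum_antipode_mul_eq_smul (Coalgebra.Repr.arbitrary ℂ h),
          Algebra.TensorProduct.one_def, tmul_smul]

lemma cstar_io2_io1 : cstar (io2 (H := H)) io1 = jmap := by
  ext h
  rw [cstar_repr _ _ (Coalgebra.Repr.arbitrary ℂ h)]
  rw [jmap, LinearMap.comp_apply, LinearEquiv.coe_coe,
    ← (Coalgebra.Repr.arbitrary ℂ h).eq, map_sum]
  exact Finset.sum_congr rfl fun i _ => by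
    simp [Algebra.TensorProduct.tmul_mul_tmul]

lemma cstar_cu_one_right (g : H →ₗ[ℂ] H ⊗[ℂ] H) : cstar g (cu 1) = g := by
  rw [cstar_cu_right]; ext h; simp

lemma cstar_cu_one_left (g : H →ₗ[ℂ] H ⊗[ℂ] H) : cstar (cu 1) g = g := by
  rw [cstar_cu_left]; ext h; simp


lemma hPQ (aR bR : ι → H)
    (hRΔ : ∀ x : H,
      (∑ i, aR i ⊗ₜ[ℂ] bR i) * Δ x
        = (TensorProduct.comm ℂ H H) (Δ x) * ∑ i, aR i ⊗ₜ[ℂ] bR i) :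
    cstar (LinearMap.mulRight ℂ (M[aR,bR]) ∘ₗ (io2 ∘ₗ HopfAlgebra.antipode (R := ℂ))) io2
      = cstar (LinearMap.mulRight ℂ (M[aR,bR]) ∘ₗ io1)
          (io1 ∘ₗ HopfAlgebra.antipode (R := ℂ)) := by
  set σ₁ : H →ₗ[ℂ] H ⊗[ℂ] H := io1 ∘ₗ HopfAlgebra.antipode (R := ℂ) with hσ₁
  set σ₂ : H →ₗ[ℂ] H ⊗[ℂ] H := io2 ∘ₗ HopfAlgebra.antipode (R := ℂ) with hσ₂
  have hj : LinearMap.mulLeft ℂ (M[aR,bR]) ∘ₗ jmap (H := H)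
      = LinearMap.mulRight ℂ (M[aR,bR]) ∘ₗ jmap := by
    ext h
    simp only [LinearMap.comp_apply, LinearMap.mulLeft_apply, LinearMap.mulRight_apply,
      jmap, LinearEquiv.coe_coe]
    exact hMj aR bR hRΔ h
  calc cstar (LinearMap.mulRight ℂ (M[aR,bR]) ∘ₗ σ₂) io2
      = cstar (cstar σ₂ (cu (M[aR,bR]))) io2 := by rw [cstar_cu_right]
    _ = cstar (cstar (cstar σ₂ (cu (M[aR,bR]))) io2) (cu 1) :=
        (cstar_cu_one_right _).symm
    _ = cstar (cstar (cstar σ₂ (cu (M[aR,bR]))) io2) (cstar io1 σ₁) := by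
        rw [cstar_io1_S]
    _ = cstar (cstar (cstar (cstar σ₂ (cu (M[aR,bR]))) io2) io1) σ₁ :=
        (cstar_assoc _ io1 σ₁).symm
    _ = cstar (cstar (cstar σ₂ (cu (M[aR,bR]))) (cstar io2 io1)) σ₁ := by
        rw [cstar_assoc (cstar σ₂ (cu (M[aR,bR]))) io2 io1]
    _ = cstar (cstar (cstar σ₂ (cu (M[aR,bR]))) jmap) σ₁ := by rw [cstar_io2_io1]
    _ = cstar (cstar σ₂ (cstar (cu (M[aR,bR])) jmap)) σ₁ := by
        rw [cstar_assoc σ₂ (cu (M[aR,bR])) jmap]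
    _ = cstar (cstar σ₂ (LinearMap.mulLeft ℂ (M[aR,bR]) ∘ₗ jmap)) σ₁ := by
        rw [cstar_cu_left]
    _ = cstar (cstar σ₂ (LinearMap.mulRight ℂ (M[aR,bR]) ∘ₗ jmap)) σ₁ := by rw [hj]
    _ = cstar (cstar σ₂ (cstar jmap (cu (M[aR,bR])))) σ₁ := by rw [cstar_cu_right]
    _ = cstar (cstar σ₂ (cstar (cstar io2 io1) (cu (M[aR,bR])))) σ₁ := by
        rw [cstar_io2_io1]
    _ = cstar (cstar σ₂ (cstar io2 (cstar io1 (cu (M[aR,bR]))))) σ₁ := by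
        rw [cstar_assoc io2 io1 (cu (M[aR,bR]))]
    _ = cstar (cstar (cstar σ₂ io2) (cstar io1 (cu (M[aR,bR])))) σ₁ := by
        rw [cstar_assoc σ₂ io2 (cstar io1 (cu (M[aR,bR])))]
    _ = cstar (cstar (cu 1) (cstar io1 (cu (M[aR,bR])))) σ₁ := by rw [cstar_S_io2]
    _ = cstar (cstar io1 (cu (M[aR,bR]))) σ₁ := by rw [cstar_cu_one_left]
    _ = cstar (LinearMap.mulRight ℂ (M[aR,bR]) ∘ₗ io1) σ₁ := by rw [cstar_cu_right]

/-- elementwise intertwining identity. -/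
lemma hINT (aR bR : ι → H)
    (hRΔ : ∀ x : H,
      (∑ i, aR i ⊗ₜ[ℂ] bR i) * Δ x
        = (TensorProduct.comm ℂ H H) (Δ x) * ∑ i, aR i ⊗ₜ[ℂ] bR i)
    {h : H} {κ : Type*} (r : Coalgebra.Repr ℂ h κ) :
    ∑ k ∈ r.index, ((1:H) ⊗ₜ[ℂ] 𝒮 (r.left k)) * M[aR,bR] * ((1:H) ⊗ₜ[ℂ] (r.right k))
      = ∑ k ∈ r.index, (r.left k ⊗ₜ[ℂ] (1:H)) * M[aR,bR] * (𝒮 (r.right k) ⊗ₜ[ℂ] (1:H)) := by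
  have := LinearMap.congr_fun (hPQ aR bR hRΔ) h
  rw [cstar_repr _ _ r, cstar_repr _ _ r] at this
  simpa only [LinearMap.comp_apply, LinearMap.mulRight_apply, io1_apply, io2_apply,
    mul_assoc] using this


lemma hKEY3 (aR bR : ι → H)
    (hR₁ : (∑ i, (Δ (aR i)) ⊗ₜ[ℂ] bR i)
        = ∑ i, ∑ j, (aR i ⊗ₜ[ℂ] aR j) ⊗ₜ[ℂ] (bR i * bR j))
    (hR₂ : (∑ i, aR i ⊗ₜ[ℂ] (Δ (bR i)))
        = ∑ i, ∑ j, (aR i * aR j) ⊗ₜ[ℂ] (bR j ⊗ₜ[ℂ] bR i)) :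
    ∑ p, ∑ q, ((Δ (aR p)) * (Δ (bR q))) ⊗ₜ[ℂ] (bR p * aR q)
      = ∑ k, ∑ l, ∑ m, ∑ n,
        ((aR k * bR n) ⊗ₜ[ℂ] (aR l * bR m)) ⊗ₜ[ℂ] ((bR k * bR l) * (aR m * aR n)) := by
  have h2c : (∑ q, (Δ (bR q)) ⊗ₜ[ℂ] aR q)
      = ∑ m, ∑ n, (bR n ⊗ₜ[ℂ] bR m) ⊗ₜ[ℂ] (aR m * aR n) := by
    have := congrArg (TensorProduct.comm ℂ H (H ⊗[ℂ] H)).toLinearMap hR₂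
    simpa [map_sum] using this
  calc ∑ p, ∑ q, ((Δ (aR p)) * (Δ (bR q))) ⊗ₜ[ℂ] (bR p * aR q)
      = (∑ p, (Δ (aR p)) ⊗ₜ[ℂ] bR p) * (∑ q, (Δ (bR q)) ⊗ₜ[ℂ] aR q) := by
        rw [Finset.sum_mul_sum]
        exact Finset.sum_congr rfl fun p _ => Finset.sum_congr rfl fun q _ =>
          (Algebra.TensorProduct.tmul_mul_tmul _ _ _ _).symm
    _ = (∑ k, ∑ l, (aR k ⊗ₜ[ℂ] aR l) ⊗ₜ[ℂ] (bR k * bR l)) *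
        (∑ m, ∑ n, (bR n ⊗ₜ[ℂ] bR m) ⊗ₜ[ℂ] (aR m * aR n)) := by rw [hR₁, h2c]
    _ = ∑ k, ∑ l, ∑ m, ∑ n,
        ((aR k * bR n) ⊗ₜ[ℂ] (aR l * bR m)) ⊗ₜ[ℂ] ((bR k * bR l) * (aR m * aR n)) := by
        rw [Finset.sum_mul]
        refine Finset.sum_congr rfl fun k _ => ?_
        rw [Finset.sum_mul]
        refine Finset.sum_congr rfl fun l _ => ?_
        rw [Finset.mul_sum]
        refine Finset.sum_congr rfl fun m _ => ?_
        rw [Finset.mul_sum]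
        refine Finset.sum_congr rfl fun n _ => ?_
        simp [Algebra.TensorProduct.tmul_mul_tmul, mul_assoc]

lemma hSC (aR bR : ι → H)
    (hR₁ : (∑ i, (Δ (aR i)) ⊗ₜ[ℂ] bR i)
        = ∑ i, ∑ j, (aR i ⊗ₜ[ℂ] aR j) ⊗ₜ[ℂ] (bR i * bR j))
    (hR₂ : (∑ i, aR i ⊗ₜ[ℂ] (Δ (bR i)))
        = ∑ i, ∑ j, (aR i * aR j) ⊗ₜ[ℂ] (bR j ⊗ₜ[ℂ] bR i))
    (α β : Module.Dual ℂ H) :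
    ∑ p, ∑ q, (LinearMap.mul' ℂ ℂ
        (TensorProduct.map α β ((Δ (aR p)) * (Δ (bR q))))) • (bR p * aR q)
      = ∑ k, ∑ l, ∑ m, ∑ n,
          (α (aR k * bR n) * β (aR l * bR m)) • ((bR k * bR l) * (aR m * aR n)) := by
  have := congrArg ((TensorProduct.lid ℂ H).toLinearMap ∘ₗ
    TensorProduct.map (LinearMap.mul' ℂ ℂ ∘ₗ TensorProduct.map α β) LinearMap.id)
    (hKEY3 aR bR hR₁ hR₂)
  simpa [map_sum, TensorProduct.map_tmul, TensorProduct.lid_tmul] using this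

lemma PsiCounit (aR bR : ι → H)
    (hRinv : IsUnit (∑ i, aR i ⊗ₜ[ℂ] bR i : H ⊗[ℂ] H))
    (hR₁ : (∑ i, (Δ (aR i)) ⊗ₜ[ℂ] bR i)
        = ∑ i, ∑ j, (aR i ⊗ₜ[ℂ] aR j) ⊗ₜ[ℂ] (bR i * bR j))
    (hR₂ : (∑ i, aR i ⊗ₜ[ℂ] (Δ (bR i)))
        = ∑ i, ∑ j, (aR i * aR j) ⊗ₜ[ℂ] (bR j ⊗ₜ[ℂ] bR i)) :
    ∑ i, ∑ j, ε (aR i * bR j) • (bR i * aR j) = (1 : H) := by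
  calc ∑ i, ∑ j, ε (aR i * bR j) • (bR i * aR j)
      = (∑ i, ε (aR i) • bR i) * (∑ j, ε (bR j) • aR j) := by
        rw [Finset.sum_mul_sum]
        refine Finset.sum_congr rfl fun i _ => Finset.sum_congr rfl fun j _ => ?_
        rw [Bialgebra.counit_mul, smul_mul_smul_comm]
    _ = 1 := by rw [hL2 aR bR hRinv hR₁, hL1 aR bR hRinv hR₂, one_mul]


lemma sum_swap4 {M : Type} [AddCommMonoid M] (f : ι → ι → ι → ι → M) :
    ∑ p, ∑ q, ∑ i, ∑ j, f p q i j = ∑ i, ∑ j, ∑ p, ∑ q, f p q i j :=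
  (Finset.sum_congr rfl fun _ _ => Finset.sum_comm).trans <|
    Finset.sum_comm.trans <|
      Finset.sum_congr rfl fun _ _ =>
        (Finset.sum_congr rfl fun _ _ => Finset.sum_comm).trans Finset.sum_comm

lemma sum_swap3 {κ : Type} [Fintype κ] {M : Type} [AddCommMonoid M] (f : ι → ι → κ → M) :
    ∑ i, ∑ j, ∑ k, f i j k = ∑ k, ∑ i, ∑ j, f i j k :=
  (Finset.sum_congr rfl fun _ _ => Finset.sum_comm).trans Finset.sum_comm


lemma goal1 (aR bR : ι → H)
    (hRinv : IsUnit (∑ i, aR i ⊗ₜ[ℂ] bR i : H ⊗[ℂ] H))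
    (hRΔ : ∀ x : H,
      (∑ i, aR i ⊗ₜ[ℂ] bR i) * Δ x
        = (TensorProduct.comm ℂ H H) (Δ x) * ∑ i, aR i ⊗ₜ[ℂ] bR i)
    (hR₁ : (∑ i, (Δ (aR i)) ⊗ₜ[ℂ] bR i)
        = ∑ i, ∑ j, (aR i ⊗ₜ[ℂ] aR j) ⊗ₜ[ℂ] (bR i * bR j))
    (hR₂ : (∑ i, aR i ⊗ₜ[ℂ] (Δ (bR i)))
        = ∑ i, ∑ j, (aR i * aR j) ⊗ₜ[ℂ] (bR j ⊗ₜ[ℂ] bR i))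
    (φ ψ : Module.Dual ℂ H) :
    PsiMap aR bR (starProd aR bR φ ψ) = PsiMap aR bR φ * PsiMap aR bR ψ := by
  calc PsiMap aR bR (starProd aR bR φ ψ)
      = ∑ p, ∑ q, ∑ i, ∑ j,
          (conv (φ ∘ₗ LinearMap.mulRight ℂ (bR j * 𝒮 (bR i)))
            (ψ ∘ₗ LinearMap.mulLeft ℂ (aR i) ∘ₗ LinearMap.mulRight ℂ (aR j)))
            (aR p * bR q) • (bR p * aR q) := by
        simp only [PsiMap, starProd, LinearMap.sum_apply, Finset.sum_smul]
    _ = ∑ i, ∑ j, ∑ p, ∑ q,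
          (conv (φ ∘ₗ LinearMap.mulRight ℂ (bR j * 𝒮 (bR i)))
            (ψ ∘ₗ LinearMap.mulLeft ℂ (aR i) ∘ₗ LinearMap.mulRight ℂ (aR j)))
            (aR p * bR q) • (bR p * aR q) := sum_swap4 _
    _ = ∑ i, ∑ j, ∑ k, ∑ l, ∑ m, ∑ n,
          (φ ((aR k * bR n) * (bR j * 𝒮 (bR i))) *
            ψ (aR i * ((aR l * bR m) * aR j))) •
            ((bR k * bR l) * (aR m * aR n)) := by
        refine Finset.sum_congr rfl fun i _ => Finset.sum_congr rfl fun j _ => ?_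
        have hc : ∀ p q : ι,
            (conv (φ ∘ₗ LinearMap.mulRight ℂ (bR j * 𝒮 (bR i)))
              (ψ ∘ₗ LinearMap.mulLeft ℂ (aR i) ∘ₗ LinearMap.mulRight ℂ (aR j)))
              (aR p * bR q)
            = LinearMap.mul' ℂ ℂ (TensorProduct.map
                (φ ∘ₗ LinearMap.mulRight ℂ (bR j * 𝒮 (bR i)))
                (ψ ∘ₗ LinearMap.mulLeft ℂ (aR i) ∘ₗ LinearMap.mulRight ℂ (aR j))
                ((Δ (aR p)) * (Δ (bR q)))) := by
          intro p q
          simp [conv, Bialgebra.comul_mul]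
        rw [Finset.sum_congr rfl fun p _ => Finset.sum_congr rfl fun q _ => by
          rw [hc p q]]
        rw [hSC aR bR hR₁ hR₂]
        refine Finset.sum_congr rfl fun k _ => Finset.sum_congr rfl fun l _ =>
          Finset.sum_congr rfl fun m _ => Finset.sum_congr rfl fun n _ => ?_
        simp only [LinearMap.comp_apply, LinearMap.mulRight_apply,
          LinearMap.mulLeft_apply]
    _ = ∑ k, ∑ n, ∑ l, ∑ m,
          (φ (aR k * bR n) * ψ (aR l * bR m)) • ((bR k * aR n) * (bR l * aR m)) := by
        have := congrArg ((TensorProduct.lid ℂ H).toLinearMap ∘ₗ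
          TensorProduct.map φ ((TensorProduct.lid ℂ H).toLinearMap ∘ₗ
            TensorProduct.map ψ LinearMap.id))
          (hKEY aR bR hRinv hRΔ hR₁ hR₂)
        simpa only [map_sum, LinearMap.coe_comp, Function.comp_apply,
          LinearEquiv.coe_coe, TensorProduct.map_tmul, TensorProduct.lid_tmul,
          LinearMap.id_coe, id_eq, smul_smul] using this
    _ = PsiMap aR bR φ * PsiMap aR bR ψ := by
        simp only [PsiMap]
        rw [Finset.sum_mul]
        refine Finset.sum_congr rfl fun k _ => ?_
        rw [Finset.sum_mul]
        refine Finset.sum_congr rfl fun n _ => ?_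
        rw [Finset.mul_sum]
        refine Finset.sum_congr rfl fun l _ => ?_
        rw [Finset.mul_sum]
        refine Finset.sum_congr rfl fun m _ => ?_
        rw [smul_mul_smul_comm]

set_option maxHeartbeats 1000000 in
lemma goal3 (aR bR : ι → H)
    (hRΔ : ∀ x : H,
      (∑ i, aR i ⊗ₜ[ℂ] bR i) * Δ x
        = (TensorProduct.comm ℂ H H) (Δ x) * ∑ i, aR i ⊗ₜ[ℂ] bR i)
    (h : H) (n : ℕ) (h1 h2 : Fin n → H)
    (hcom : Δ h = ∑ k, h1 k ⊗ₜ[ℂ] h2 k) (φ : Module.Dual ℂ H) :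
    PsiMap aR bR (∑ k, φ ∘ₗ LinearMap.mulLeft ℂ (h1 k)
        ∘ₗ LinearMap.mulRight ℂ (𝒮 (h2 k)))
      = ∑ k, 𝒮 (h1 k) * PsiMap aR bR φ * h2 k := by
  have key := hINT aR bR hRΔ (⟨Finset.univ, h1, h2, hcom.symm⟩ : Coalgebra.Repr ℂ h (Fin n))
  simp only at key
  have expand1 : ∀ x y : H,
      (x ⊗ₜ[ℂ] (1:H)) * M[aR,bR] * (y ⊗ₜ[ℂ] (1:H))
        = ∑ i, ∑ j, (x * (aR i * bR j) * y) ⊗ₜ[ℂ] (bR i * aR j) := by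
    intro x y
    rw [Finset.mul_sum, Finset.sum_mul]
    refine Finset.sum_congr rfl fun i _ => ?_
    rw [Finset.mul_sum, Finset.sum_mul]
    refine Finset.sum_congr rfl fun j _ => ?_
    simp [Algebra.TensorProduct.tmul_mul_tmul]
  have expand2 : ∀ x y : H,
      ((1:H) ⊗ₜ[ℂ] x) * M[aR,bR] * ((1:H) ⊗ₜ[ℂ] y)
        = ∑ i, ∑ j, (aR i * bR j) ⊗ₜ[ℂ] (x * (bR i * aR j) * y) := by
    intro x y
    rw [Finset.mul_sum, Finset.sum_mul]
    refine Finset.sum_congr rfl fun i _ => ?_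
    rw [Finset.mul_sum, Finset.sum_mul]
    refine Finset.sum_congr rfl fun j _ => ?_
    simp [Algebra.TensorProduct.tmul_mul_tmul]
  rw [Finset.sum_congr rfl fun k _ => expand1 (h1 k) (𝒮 (h2 k)),
      Finset.sum_congr rfl fun k _ => expand2 (𝒮 (h1 k)) (h2 k)] at key
  have keyφ := congrArg ((TensorProduct.lid ℂ H).toLinearMap ∘ₗ
    TensorProduct.map φ LinearMap.id) key
  simp only [map_sum, LinearMap.coe_comp, Function.comp_apply, LinearEquiv.coe_coe,
    TensorProduct.map_tmul, TensorProduct.lid_tmul, LinearMap.id_coe, id_eq] at keyφ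
  calc PsiMap aR bR (∑ k, φ ∘ₗ LinearMap.mulLeft ℂ (h1 k)
        ∘ₗ LinearMap.mulRight ℂ (𝒮 (h2 k)))
      = ∑ i, ∑ j, ∑ k, φ (h1 k * ((aR i * bR j) * 𝒮 (h2 k))) • (bR i * aR j) := by
        simp only [PsiMap, LinearMap.sum_apply, Finset.sum_smul, LinearMap.coe_comp,
          Function.comp_apply, LinearMap.mulLeft_apply, LinearMap.mulRight_apply]
    _ = ∑ k, ∑ i, ∑ j, φ (h1 k * ((aR i * bR j) * 𝒮 (h2 k))) • (bR i * aR j) :=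
        sum_swap3 _
    _ = ∑ k, ∑ i, ∑ j, φ ((aR i * bR j)) • (𝒮 (h1 k) * (bR i * aR j) * h2 k) := by
        refine Eq.trans (Finset.sum_congr rfl fun k _ => Finset.sum_congr rfl
          fun i _ => Finset.sum_congr rfl fun j _ => by rw [← mul_assoc]) keyφ.symm
    _ = ∑ k, 𝒮 (h1 k) * PsiMap aR bR φ * h2 k := by
        refine Finset.sum_congr rfl fun k _ => ?_
        simp only [PsiMap]
        rw [Finset.mul_sum, Finset.sum_mul]
        refine Finset.sum_congr rfl fun i _ => ?_
        rw [Finset.mul_sum, Finset.sum_mul]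
        refine Finset.sum_congr rfl fun j _ => ?_
        rw [mul_smul_comm, smul_mul_assoc]

end LoopAux

theorem loop_algebra_iso
    {H : Type} [Ring H] [HopfAlgebra ℂ H] [FiniteDimensional ℂ H]
    -- the antipode is invertible
    (Sinv : H →ₗ[ℂ] H)
    (hSinv₁ : ∀ x : H, Sinv (HopfAlgebra.antipode (R := ℂ) x) = x)
    (hSinv₂ : ∀ x : H, HopfAlgebra.antipode (R := ℂ) (Sinv x) = x)
    -- an invertible R-matrix `R = Σᵢ aᵢ ⊗ bᵢ`
    {ι : Type} [Fintype ι] (aR bR : ι → H)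
    (hRinv : IsUnit (∑ i, aR i ⊗ₜ[ℂ] bR i : H ⊗[ℂ] H))
    (hRΔ : ∀ x : H,
      (∑ i, aR i ⊗ₜ[ℂ] bR i) * Coalgebra.comul (R := ℂ) x
        = (TensorProduct.comm ℂ H H) (Coalgebra.comul (R := ℂ) x)
            * ∑ i, aR i ⊗ₜ[ℂ] bR i)
    (hR₁ : (∑ i, (Coalgebra.comul (R := ℂ) (aR i)) ⊗ₜ[ℂ] bR i)
        = ∑ i, ∑ j, (aR i ⊗ₜ[ℂ] aR j) ⊗ₜ[ℂ] (bR i * bR j))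
    (hR₂ : (∑ i, aR i ⊗ₜ[ℂ] (Coalgebra.comul (R := ℂ) (bR i)))
        = ∑ i, ∑ j, (aR i * aR j) ⊗ₜ[ℂ] (bR j ⊗ₜ[ℂ] bR i))
    -- factorizability: `Ψ` is bijective
    (hfact : Function.Bijective (PsiMap aR bR)) :
    -- `Ψ(φ ∗ ψ) = Ψ(φ)·Ψ(ψ)`
    (∀ φ ψ : Module.Dual ℂ H,
      PsiMap aR bR (starProd aR bR φ ψ) = PsiMap aR bR φ * PsiMap aR bR ψ)
    -- `Ψ(ε) = 1`
    ∧ PsiMap aR bR (Coalgebra.counit (R := ℂ)) = 1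
    -- `Ψ` intertwines the actions: `Ψ(φ(h' ? S(h''))) = S(h') Ψ(φ) h''`
    -- (stated for any finite Sweedler decomposition `Δ(h) = Σ_k h1ₖ ⊗ h2ₖ`)
    ∧ (∀ (h : H) (n : ℕ) (h1 h2 : Fin n → H),
        Coalgebra.comul (R := ℂ) h = ∑ k, h1 k ⊗ₜ[ℂ] h2 k →
        ∀ φ : Module.Dual ℂ H,
          PsiMap aR bR (∑ k, φ ∘ₗ LinearMap.mulLeft ℂ (h1 k)
              ∘ₗ LinearMap.mulRight ℂ (HopfAlgebra.antipode (R := ℂ) (h2 k)))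
            = ∑ k, HopfAlgebra.antipode (R := ℂ) (h1 k) * PsiMap aR bR φ * h2 k)
    -- `(H*, ∗, ε)` is an associative unital algebra
    ∧ (∀ φ ψ χ : Module.Dual ℂ H,
        starProd aR bR (starProd aR bR φ ψ) χ = starProd aR bR φ (starProd aR bR ψ χ))
    ∧ (∀ φ : Module.Dual ℂ H,
        starProd aR bR (Coalgebra.counit (R := ℂ)) φ = φ
          ∧ starProd aR bR φ (Coalgebra.counit (R := ℂ)) = φ)
    -- and `Ψ` is an algebra isomorphism onto `H`
    ∧ Function.Bijective (PsiMap aR bR) := by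
  have g1 : ∀ φ ψ : Module.Dual ℂ H,
      PsiMap aR bR (starProd aR bR φ ψ) = PsiMap aR bR φ * PsiMap aR bR ψ :=
    fun φ ψ => LoopAux.goal1 aR bR hRinv hRΔ hR₁ hR₂ φ ψ
  have g2 : PsiMap aR bR (Coalgebra.counit (R := ℂ)) = 1 := by
    simp only [PsiMap]
    exact LoopAux.PsiCounit aR bR hRinv hR₁ hR₂
  refine ⟨g1, g2, ?_, ?_, ?_, hfact⟩
  · intro h n h1 h2 hcom φ
    exact LoopAux.goal3 aR bR hRΔ h n h1 h2 hcom φ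
  · intro φ ψ χ
    apply hfact.injective
    rw [g1, g1, g1, g1, mul_assoc]
  · intro φ
    constructor
    · apply hfact.injective
      rw [g1, g2, one_mul]
    · apply hfact.injective
      rw [g1, g2, mul_one]

end
end

section
/- The map Π_A from the vector space of traces on Proj_A to SLF(A), defined by Π_A(t)(a) = t_A(ρ_a), is a linear isomorphism; in particular, a trace on the finite-dimensional projective A-modules is uniquely determined by its component on the left regular module, and every symmetric linear form on A arises from a unique trace. -/
/- STATEMENT 12: the map `Π_A`, sending a trace `t` on the finite-dimensional projective
`A`-modules to the symmetric linear form `a ↦ t_A(ρ_a)`, is a linear isomorphism onto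
`SLF(A)`. -/

noncomputable section

/-- Symmetric linear forms on `A`. -/
def IsSLFk (k : Type) {A : Type} [Field k] [Ring A] [Algebra k A] (φ : A → k) : Prop :=
  ∀ a b : A, φ (a * b) = φ (b * a)

/-- A family of `k`-linear maps `t_W : End_A(W) →ₗ[k] k`, indexed by the
finite-dimensional projective (left) `A`-modules `W`. -/
def TraceFun (k A : Type) [Field k] [Ring A] [Algebra k A] : Type 1 :=
  ∀ (W : Type) [AddCommGroup W] [Module k W] [Module A W] [IsScalarTower k A W]
    [SMulCommClass k A W] [SMulCommClass A k W] [Module.Finite k W]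
    [Module.Projective A W], (W →ₗ[A] W) →ₗ[k] k

/-- The trace property: `t_V(f ∘ g) = t_U(g ∘ f)` for all `f : U → V`, `g : V → U`. -/
def IsTrace {k A : Type} [Field k] [Ring A] [Algebra k A] (t : TraceFun k A) : Prop :=
  ∀ (W₁ : Type) [AddCommGroup W₁] [Module k W₁] [Module A W₁] [IsScalarTower k A W₁]
    [SMulCommClass k A W₁] [SMulCommClass A k W₁] [Module.Finite k W₁]
    [Module.Projective A W₁],
  ∀ (W₂ : Type) [AddCommGroup W₂] [Module k W₂] [Module A W₂] [IsScalarTower k A W₂]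
    [SMulCommClass k A W₂] [SMulCommClass A k W₂] [Module.Finite k W₂]
    [Module.Projective A W₂],
  ∀ (f : W₁ →ₗ[A] W₂) (g : W₂ →ₗ[A] W₁), t W₂ (f ∘ₗ g) = t W₁ (g ∘ₗ f)

instance (priority := 500) SMulCommClass.algebraSelf {k A : Type} [CommSemiring k]
    [Semiring A] [Algebra k A] : SMulCommClass A k A :=
  SMulCommClass.symm k A A

/-- `Π_A(t)(a) = t_A(ρ_a)`, where `ρ_a` is right multiplication by `a` on the left
regular module. -/
def PiMap {k A : Type} [Field k] [Ring A] [Algebra k A] [FiniteDimensional k A]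
    (t : TraceFun k A) : A → k :=
  fun a => t A (LinearMap.toSpanSingleton A A a)

section Aux

variable {k A : Type} [Field k] [Ring A] [Algebra k A]

/-- Existence of a finite dual basis for a finitely generated projective module. -/
lemma exists_dualBasis (W : Type) [AddCommGroup W] [Module k W] [Module A W]
    [IsScalarTower k A W] [Module.Finite k W] [Module.Projective A W] :
    ∃ (n : ℕ) (w : Fin n → W) (p : Fin n → (W →ₗ[A] A)),
      ∀ x : W, ∑ i, p i x • w i = x := by
  haveI : Module.Finite A W := Module.Finite.of_restrictScalars_finite k A W
  obtain ⟨n, f, hf⟩ := Module.Finite.exists_fin' A W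
  obtain ⟨σ, hσ⟩ := Module.projective_lifting_property f LinearMap.id hf
  refine ⟨n, fun i => f (fun j => if i = j then 1 else 0),
    fun i => (LinearMap.proj i) ∘ₗ σ, fun x => ?_⟩
  have h1 := (LinearMap.pi_apply_eq_sum_univ f (σ x)).symm
  have h2 : f (σ x) = x := congrFun (congrArg DFunLike.coe hσ) x
  simpa [h2] using h1

/-- Every `A`-endomorphism of the left regular module is right multiplication. -/
lemma endo_regular (e : A →ₗ[A] A) : e = LinearMap.toSpanSingleton A A (e 1) := by
  refine LinearMap.ext fun a => ?_
  simpa [LinearMap.toSpanSingleton_apply, smul_eq_mul] using map_smul e a 1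

lemma comp_toSpanSingleton (W : Type) [AddCommGroup W] [Module A W]
    (q : W →ₗ[A] A) (x : W) :
    q ∘ₗ LinearMap.toSpanSingleton A W x = LinearMap.toSpanSingleton A A (q x) := by
  refine LinearMap.ext fun a => ?_
  simp [LinearMap.toSpanSingleton_apply]

/-- The key computation: the value of a trace on any endomorphism of any
finite-dimensional projective module is determined by `PiMap t`, via a dual basis. -/
lemma trace_formula [FiniteDimensional k A]
    (t : TraceFun k A) (ht : IsTrace t)
    (W : Type) [AddCommGroup W] [Module k W] [Module A W] [IsScalarTower k A W]
    [SMulCommClass k A W] [SMulCommClass A k W] [Module.Finite k W] [Module.Projective A W]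
    (n : ℕ) (w : Fin n → W) (p : Fin n → (W →ₗ[A] A))
    (hdb : ∀ x : W, ∑ i, p i x • w i = x) (h : W →ₗ[A] W) :
    t W h = ∑ i, PiMap t (p i (h (w i))) := by
  have hh : h = ∑ i, LinearMap.toSpanSingleton A W (w i) ∘ₗ (p i ∘ₗ h) := by
    refine LinearMap.ext fun x => ?_
    simp [LinearMap.sum_apply, LinearMap.toSpanSingleton_apply, hdb (h x)]
  calc t W h = t W (∑ i, LinearMap.toSpanSingleton A W (w i) ∘ₗ (p i ∘ₗ h)) := by rw [← hh]
    _ = ∑ i, t W (LinearMap.toSpanSingleton A W (w i) ∘ₗ (p i ∘ₗ h)) := map_sum _ _ _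
    _ = ∑ i, PiMap t (p i (h (w i))) := by
        refine Finset.sum_congr rfl fun i _ => ?_
        rw [ht A W (LinearMap.toSpanSingleton A W (w i)) (p i ∘ₗ h),
          comp_toSpanSingleton]
        rfl

/-- A packaged (chosen) dual basis for each finite-dimensional projective module. -/
def db (W : Type) [AddCommGroup W] [Module k W]
    [Module A W] [IsScalarTower k A W] [Module.Finite k W] [Module.Projective A W] :
    {x : Σ n : ℕ, (Fin n → W) × (Fin n → (W →ₗ[A] A)) //
      ∀ v : W, ∑ i, x.2.2 i v • x.2.1 i = v} :=
  Classical.choice (by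
    obtain ⟨n, w, p, hdb⟩ := exists_dualBasis (k := k) (A := A) W
    exact ⟨⟨⟨n, w, p⟩, hdb⟩⟩)

/-- The trace associated to a symmetric linear form, via chosen dual bases. -/
def traceOf (φ : Module.Dual k A) : TraceFun k A :=
  fun W _ _ _ _ _ _ _ _ =>
    { toFun := fun h =>
        ∑ i, φ ((db (k := k) W).1.2.2 i (h ((db (k := k) W).1.2.1 i)))
      map_add' := by
        intro f g
        simp [Finset.sum_add_distrib]
      map_smul' := by
        intro c f
        simp only [LinearMap.smul_apply, RingHom.id_apply, Finset.smul_sum]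
        refine Finset.sum_congr rfl fun i _ => ?_
        rw [← algebraMap_smul A c, map_smul, algebraMap_smul, map_smul] }

/-- Abstract computation: the trace property for the sums defined by dual bases,
for a symmetric linear form `φ`. -/
lemma key_sym (φ : Module.Dual k A) (hφ : IsSLFk k φ)
    (W₁ : Type) [AddCommGroup W₁] [Module A W₁]
    (W₂ : Type) [AddCommGroup W₂] [Module A W₂]
    (n₁ : ℕ) (w₁ : Fin n₁ → W₁) (p₁ : Fin n₁ → (W₁ →ₗ[A] A))
    (hdb₁ : ∀ x : W₁, ∑ j, p₁ j x • w₁ j = x)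
    (n₂ : ℕ) (w₂ : Fin n₂ → W₂) (p₂ : Fin n₂ → (W₂ →ₗ[A] A))
    (hdb₂ : ∀ x : W₂, ∑ i, p₂ i x • w₂ i = x)
    (f : W₁ →ₗ[A] W₂) (g : W₂ →ₗ[A] W₁) :
    ∑ i, φ (p₂ i ((f ∘ₗ g) (w₂ i))) = ∑ j, φ (p₁ j ((g ∘ₗ f) (w₁ j))) := by
  have key1 : ∀ i, p₂ i ((f ∘ₗ g) (w₂ i))
      = ∑ j, p₁ j (g (w₂ i)) * p₂ i (f (w₁ j)) := by
    intro i
    calc p₂ i ((f ∘ₗ g) (w₂ i))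
        = p₂ i (f (∑ j, p₁ j (g (w₂ i)) • w₁ j)) := by rw [hdb₁]; rfl
      _ = ∑ j, p₁ j (g (w₂ i)) * p₂ i (f (w₁ j)) := by
          simp [map_sum, map_smul, smul_eq_mul]
  have key2 : ∀ j, p₁ j ((g ∘ₗ f) (w₁ j))
      = ∑ i, p₂ i (f (w₁ j)) * p₁ j (g (w₂ i)) := by
    intro j
    calc p₁ j ((g ∘ₗ f) (w₁ j))
        = p₁ j (g (∑ i, p₂ i (f (w₁ j)) • w₂ i)) := by rw [hdb₂]; rfl
      _ = ∑ i, p₂ i (f (w₁ j)) * p₁ j (g (w₂ i)) := by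
          simp [map_sum, map_smul, smul_eq_mul]
  simp only [key1, key2, map_sum]
  rw [Finset.sum_comm]
  exact Finset.sum_congr rfl fun j _ => Finset.sum_congr rfl fun i _ => hφ _ _

/-- Abstract computation: the dual-basis trace of `ρ_a` on the regular module is `φ a`. -/
lemma key_reg (φ : Module.Dual k A) (hφ : IsSLFk k φ)
    (n : ℕ) (w : Fin n → A) (p : Fin n → (A →ₗ[A] A))
    (hdb : ∀ x : A, ∑ i, p i x • w i = x) (a : A) :
    ∑ i, φ (p i ((LinearMap.toSpanSingleton A A a) (w i))) = φ a := by
  have hp : ∀ i (x : A), p i x = x * p i 1 := by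
    intro i x
    conv_lhs => rw [endo_regular (p i)]
    simp [LinearMap.toSpanSingleton_apply, smul_eq_mul]
  have key : ∀ i, φ (p i (w i • a)) = φ (a * (p i 1 * w i)) := by
    intro i
    rw [hp, smul_eq_mul, mul_assoc, hφ (w i) (a * p i 1), mul_assoc]
  calc (∑ i, φ (p i ((LinearMap.toSpanSingleton A A a) (w i))))
      = ∑ i, φ (a * (p i 1 * w i)) := by
        simp only [LinearMap.toSpanSingleton_apply]
        exact Finset.sum_congr rfl fun i _ => key i
    _ = φ (a * ∑ i, p i 1 * w i) := by rw [← map_sum, ← Finset.mul_sum]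
    _ = φ a := by
        have h1 : (∑ i, p i 1 * w i) = 1 := by simpa [smul_eq_mul] using hdb 1
        rw [h1, mul_one]

end Aux

theorem traces_correspond_to_symmetric_forms
    (k A : Type) [Field k] [Ring A] [Algebra k A] [FiniteDimensional k A] :
    -- `Π_A(t)` is a symmetric linear form
    (∀ t : TraceFun k A, IsTrace t → IsSLFk k (PiMap t))
    ∧ (∀ (t : TraceFun k A), IsTrace t → ∀ a b : A, PiMap t (a + b) = PiMap t a + PiMap t b)
    ∧ (∀ (t : TraceFun k A), IsTrace t → ∀ (c : k) (a : A), PiMap t (c • a) = c * PiMap t a)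
    -- `Π_A` is linear
    ∧ (∀ (t t' : TraceFun k A), IsTrace t → IsTrace t' → ∀ (c : k) (a : A),
        PiMap (fun W _ _ _ _ _ _ _ _ => t W + c • t' W) a = PiMap t a + c * PiMap t' a)
    -- `Π_A` is injective: a trace is determined by its component on the regular module
    ∧ (∀ t t' : TraceFun k A, IsTrace t → IsTrace t' → PiMap t = PiMap t' → t = t')
    -- `Π_A` is surjective onto `SLF(A)`
    ∧ (∀ φ : Module.Dual k A, IsSLFk k φ →
        ∃ t : TraceFun k A, IsTrace t ∧ PiMap t = φ) := by
  have rho_mul : ∀ a b : A, LinearMap.toSpanSingleton A A (a * b)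
      = LinearMap.toSpanSingleton A A b ∘ₗ LinearMap.toSpanSingleton A A a := by
    intro a b
    refine LinearMap.ext fun x => ?_
    simp [LinearMap.toSpanSingleton_apply, smul_eq_mul, mul_assoc]
  refine ⟨?_, ?_, ?_, ?_, ?_, ?_⟩
  · -- symmetry
    intro t ht a b
    show t A _ = t A _
    rw [rho_mul a b, rho_mul b a,
      ht A A (LinearMap.toSpanSingleton A A b) (LinearMap.toSpanSingleton A A a)]
  · -- additive
    intro t ht a b
    show t A _ = t A _ + t A _
    have : LinearMap.toSpanSingleton A A (a + b)
        = LinearMap.toSpanSingleton A A a + LinearMap.toSpanSingleton A A b := by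
      refine LinearMap.ext fun x => ?_
      simp [LinearMap.toSpanSingleton_apply, smul_eq_mul, mul_add]
    rw [this, map_add]
  · -- homogeneous
    intro t ht c a
    show t A _ = c * t A _
    have : LinearMap.toSpanSingleton A A (c • a)
        = c • LinearMap.toSpanSingleton A A a := by
      refine LinearMap.ext fun x => ?_
      simp only [LinearMap.toSpanSingleton_apply, LinearMap.smul_apply]
      exact smul_comm x c a
    rw [this, map_smul, smul_eq_mul]
  · -- linearity of ΠA
    intro t t' ht ht' c a
    simp [PiMap, smul_eq_mul]
  · -- injectivity
    intro t t' ht ht' hP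
    funext W i1 i2 i3 i4 i5 i6 i7 i8
    refine LinearMap.ext fun h => ?_
    obtain ⟨n, w, p, hdb⟩ := exists_dualBasis (k := k) (A := A) W
    rw [trace_formula t ht W n w p hdb h, trace_formula t' ht' W n w p hdb h, hP]
  · -- surjectivity
    intro φ hφ
    refine ⟨traceOf φ, ?_, ?_⟩
    · -- trace property
      intro W₁ _ _ _ _ _ _ _ _ W₂ _ _ _ _ _ _ _ _ f g
      exact key_sym φ hφ W₁ W₂ _ _ _ (db (k := k) W₁).2 _ _ _ (db (k := k) W₂).2 f g
    · -- ΠA (traceOf φ) = φ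
      funext a
      exact key_reg φ hφ _ _ _ (db (k := k) A).2 a

end
end
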